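/- arXiv:1501.00739 — 4 statements merged into one kernel-verified Lean document; each statement's English description precedes it below -/
import Mathlib

section
/- Core drift inequality for the inversion count (Lemma 3 of the paper, under the attraction assumption (A4a)): Let x ∈ 𝒮_hgt with interface y. Assume (i) there is s̄ > 0 such that p_k(x) + q_k(x) ≥ s̄ for every half-integer k with x_{k−1} ≠ x_k; (ii) p_k(x) + q_k(x) ≤ 1 for every half-integer k; (iii) (A4a) for all half-integers k < l such that x_{k−1} ≠ x_k, x_{l−1} ≠ x_l and x is constant on {k, k+1, …, l−1}, one has p_k(x) + q_l(x) ≥ q_k(x) + p_l(x); (iv) there is d̄ ≥ 0 such that ch(y)·(Σ_{i: y_i = +1} b⊕_i(y) − Σ_{i: y_i = −1} b⊖_i(y)) ≤ d̄·|y|. Then for all α₁, α₂ ≥ 0: α₁·(G^flip f_CD)(x) + α₂·(G^excl f_CD)(x) ≤ α₁·s̄ − (α₁·s̄/2 − α₂·d̄)·|y|. -/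
open scoped BigOperators

/- Half-integers `k ∈ ℤ + 1/2` are represented by integers `j`, via `k = j + 1/2`.
A height configuration is a function `x : ℤ → ℤ` with values in `{0,1}`,
eventually constant in both directions with different limiting values. -/
def IsHeight (x : ℤ → ℤ) : Prop :=
  (∀ k, x k = 0 ∨ x k = 1) ∧
  ∃ a b : ℤ, a ≠ b ∧ (∃ N : ℤ, ∀ k ≤ N, x k = a) ∧ (∃ M : ℤ, ∀ k, M ≤ k → x k = b)

/-- The interface of a height configuration: `y i = x (i+1/2) - x (i-1/2)`. -/
def itf (x : ℤ → ℤ) : ℤ → ℤ := fun i => x i - x (i - 1)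

/-- The charge of a particle configuration. -/
noncomputable def charge (y : ℤ → ℤ) : ℤ := ∑ᶠ i, y i

/-- The particle number of a particle configuration. -/
noncomputable def pnum (y : ℤ → ℤ) : ℤ := ∑ᶠ i, |y i|

/-- `κ = (1 + ch(y))/2`. -/
noncomputable def kappa (x : ℤ → ℤ) : ℤ := (1 + charge (itf x)) / 2

/-- The inversion count `f_CD`. -/
noncomputable def fCD (x : ℤ → ℤ) : ℕ :=
  Nat.card {p : ℤ × ℤ // p.1 < p.2 ∧ x p.1 = kappa x ∧ x p.2 = 1 - kappa x}

/-- Flip the height at position `k`. -/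
def flipAt (x : ℤ → ℤ) (k : ℤ) : ℤ → ℤ := Function.update x k (1 - x k)

/-- Interchange the heights at positions `k` and `k+1`. -/
def swapAt (x : ℤ → ℤ) (k : ℤ) : ℤ → ℤ :=
  fun j => if j = k then x (k + 1) else if j = k + 1 then x k else x j

/-- `S(k) = Σ_{l<k} 1{x_l = κ} − Σ_{l>k} 1{x_l = 1−κ}`. -/
noncomputable def Sfun (x : ℤ → ℤ) (k : ℤ) : ℤ :=
  (Nat.card {l : ℤ // l < k ∧ x l = kappa x} : ℤ)
    - (Nat.card {l : ℤ // k < l ∧ x l = 1 - kappa x} : ℤ)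

/-- The spin-flip part of the generator applied to `f_CD`. -/
noncomputable def Gflip (p q : ℤ → ℝ) (x : ℤ → ℤ) : ℝ :=
  ∑ᶠ k : ℤ, (p k + q (k + 1)) * ((fCD (flipAt x k) : ℝ) - (fCD x : ℝ))

/-- The exclusion part of the generator applied to `f_CD`. -/
noncomputable def Gexcl (bp bm : ℤ → ℝ) (x : ℤ → ℤ) : ℝ :=
  ∑ᶠ k : ℤ,
    ((if x k = 0 ∧ x (k + 1) = 1 then bp (k + 1) else 0)
      + (if x k = 1 ∧ x (k + 1) = 0 then bm (k + 1) else 0))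
    * ((fCD (swapAt x k) : ℝ) - (fCD x : ℝ))
open Finset

theorem natCard_eq_card {α : Type*} (P : α → Prop) (s : Finset α) (h : ∀ a, P a ↔ a ∈ s) :
    Nat.card {l : α // P l} = s.card := by
  have h2 : {l : α | P l} = ↑s := Set.ext fun a => (h a).trans (Finset.mem_coe).symm
  calc Nat.card {l : α // P l} = ({l : α | P l} : Set α).ncard := Nat.card_coe_set_eq _
    _ = (↑s : Set α).ncard := by rw [h2]
    _ = s.card := Set.ncard_coe_finset s

theorem sum_Icc_telescope (f : ℤ → ℤ) (N : ℤ) : ∀ M, N ≤ M →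
    ∑ i ∈ Finset.Icc (N+1) M, (f i - f (i-1)) = f M - f N := by
  refine Int.le_induction ?_ ?_
  · simp [show Finset.Icc (N+1) N = ∅ from Finset.Icc_eq_empty (by omega)]
  · intro M hM ih
    rw [show Finset.Icc (N+1) (M+1) = insert (M+1) (Finset.Icc (N+1) M) by
      ext i; simp [Finset.mem_Icc]; omega]
    rw [Finset.sum_insert (by simp)]
    rw [ih]
    simp only [add_sub_cancel_right]
    ring

theorem stretch (z : ℤ → ℤ) (k : ℤ) : ∀ l, k ≤ l →
    (∀ m, k < m → m ≤ l → z (m-1) = z m) → z k = z l := by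
  refine Int.le_induction ?_ ?_
  · intro _; rfl
  · intro l hl ih h
    have h1 : z k = z l := ih (fun m h1 h2 => h m h1 (by omega))
    have h2 : z l = z (l+1) := by
      have := h (l+1) (by omega) le_rfl
      simpa using this
    omega

theorem charge_eq (z : ℤ → ℤ) (a b N M : ℤ) (hNM : N ≤ M)
    (hN : ∀ k ≤ N, z k = a) (hM : ∀ k, M ≤ k → z k = b) :
    charge (itf z) = b - a := by
  have hsupp : Function.support (itf z) ⊆ ↑(Finset.Icc (N+1) M) := by
    intro i hi
    simp only [Function.mem_support, itf] at hi
    simp only [Finset.coe_Icc, Set.mem_Icc]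
    constructor
    · by_contra h; push_neg at h
      exact hi (by rw [hN i (by omega), hN (i-1) (by omega)]; ring)
    · by_contra h; push_neg at h
      exact hi (by rw [hM i (by omega), hM (i-1) (by omega)]; ring)
  rw [charge, finsum_eq_finset_sum_of_support_subset _ hsupp]
  rw [show (∑ i ∈ Finset.Icc (N+1) M, itf z i) = ∑ i ∈ Finset.Icc (N+1) M, (z i - z (i-1)) from rfl]
  rw [sum_Icc_telescope z N M hNM, hN N le_rfl, hM M le_rfl]

theorem kappa_eq (z : ℤ → ℤ) (b : ℤ) (h : charge (itf z) = b - (1 - b)) : kappa z = b := by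
  rw [kappa, h]
  have : (1 : ℤ) + (b - (1 - b)) = 2 * b := by ring
  rw [this]
  omega
section FCD

attribute [local instance] Classical.propDecidable

theorem fCD_repr (z : ℤ → ℤ) (b lo hi : ℤ) (hk : kappa z = b)
    (hbnd1 : ∀ l, z l = b → lo ≤ l) (hbnd2 : ∀ l, z l = 1 - b → l ≤ hi) :
    fCD z = (((Finset.Icc lo hi) ×ˢ (Finset.Icc lo hi)).filter
      (fun pr => pr.1 < pr.2 ∧ z pr.1 = b ∧ z pr.2 = 1 - b)).card := by
  rw [fCD, hk]
  apply natCard_eq_card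
  intro pr
  simp only [Finset.mem_filter, Finset.mem_product, Finset.mem_Icc]
  constructor
  · rintro ⟨h1, h2, h3⟩
    have b1 := hbnd1 pr.1 h2
    have b2 := hbnd2 pr.2 h3
    exact ⟨⟨⟨b1, by omega⟩, ⟨by omega, b2⟩⟩, h1, h2, h3⟩
  · rintro ⟨_, h⟩; exact h

end FCD
section Flip

attribute [local instance] Classical.propDecidable

theorem fCD_flip (x : ℤ → ℤ) (b N M : ℤ) (hNM : N ≤ M)
    (hNa : ∀ k ≤ N, x k = 1 - b) (hMb : ∀ k, M ≤ k → x k = b)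
    (hb : b = 0 ∨ b = 1) (hv : ∀ l, x l = b ∨ x l = 1 - b) (k₀ : ℤ) :
    (fCD (flipAt x k₀) : ℤ) - (fCD x : ℤ)
      = (if x k₀ = b then 1 else -1) * Sfun x k₀ := by
  have hbb : (1:ℤ) - b ≠ b := by omega
  set x' := flipAt x k₀ with hx'def
  have hx'ne : ∀ l, l ≠ k₀ → x' l = x l := fun l hl => Function.update_of_ne hl _ _
  have hx'k : x' k₀ = 1 - x k₀ := Function.update_self _ _ _
  set lo := min N (k₀ - 1) with hlo
  set hi := max M (k₀ + 1) with hhi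
  have hlok : lo ≤ k₀ - 1 := min_le_right _ _
  have hloN : lo ≤ N := min_le_left _ _
  have hhik : k₀ + 1 ≤ hi := le_max_right _ _
  have hhiM : M ≤ hi := le_max_left _ _
  have hxb1 : ∀ l, x l = b → lo ≤ l := by
    intro l hl
    by_contra h
    push_neg at h
    rw [hNa l (by omega)] at hl
    exact hbb hl
  have hxb2 : ∀ l, x l = 1 - b → l ≤ hi := by
    intro l hl
    by_contra h
    push_neg at h
    rw [hMb l (by omega)] at hl
    exact hbb hl.symm
  have hx'b1 : ∀ l, x' l = b → lo ≤ l := by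
    intro l hl
    by_contra h
    push_neg at h
    rw [hx'ne l (by omega), hNa l (by omega)] at hl
    exact hbb hl
  have hx'b2 : ∀ l, x' l = 1 - b → l ≤ hi := by
    intro l hl
    by_contra h
    push_neg at h
    rw [hx'ne l (by omega), hMb l (by omega)] at hl
    exact hbb hl.symm
  have kx : kappa x = b :=
    kappa_eq x b (charge_eq x (1-b) b N M hNM hNa hMb)
  have kx' : kappa x' = b := by
    refine kappa_eq x' b (charge_eq x' (1-b) b lo hi (by omega) ?_ ?_)
    · intro k hk
      rw [hx'ne k (by omega)]
      exact hNa k (by omega)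
    · intro k hk
      rw [hx'ne k (by omega)]
      exact hMb k (by omega)
  set B := Finset.Icc lo hi with hB
  have repx := fCD_repr x b lo hi kx hxb1 hxb2
  have repx' := fCD_repr x' b lo hi kx' hx'b1 hx'b2
  set Ac := (B.filter (fun j => k₀ < j ∧ x j = 1 - b)).card with hAc
  set Bc := (B.filter (fun j => j < k₀ ∧ x j = b)).card with hBc
  set Cc := ((B ×ˢ B).filter
    (fun pr : ℤ × ℤ => (pr.1 ≠ k₀ ∧ pr.2 ≠ k₀) ∧ pr.1 < pr.2 ∧ x pr.1 = b ∧ x pr.2 = 1 - b)).card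
    with hCc
  have mainb : ∀ z : ℤ → ℤ, (∀ l, l ≠ k₀ → z l = x l) → z k₀ = b →
      ((B ×ˢ B).filter (fun pr : ℤ × ℤ => pr.1 < pr.2 ∧ z pr.1 = b ∧ z pr.2 = 1 - b)).card
        = Ac + Cc := by
    intro z hz hzk
    have split : (B ×ˢ B).filter (fun pr : ℤ × ℤ => pr.1 < pr.2 ∧ z pr.1 = b ∧ z pr.2 = 1 - b)
        = (({k₀} : Finset ℤ) ×ˢ (B.filter (fun j => k₀ < j ∧ x j = 1 - b)))
          ∪ ((B ×ˢ B).filter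
            (fun pr : ℤ × ℤ => (pr.1 ≠ k₀ ∧ pr.2 ≠ k₀) ∧ pr.1 < pr.2 ∧ x pr.1 = b ∧ x pr.2 = 1 - b)) := by
      ext pr
      simp only [Finset.mem_filter, Finset.mem_union, Finset.mem_product, Finset.mem_singleton,
        Finset.mem_Icc, hB]
      constructor
      · rintro ⟨⟨hB1, hB2⟩, hlt, h1, h2⟩
        by_cases hc : pr.1 = k₀
        · left
          have h2' : x pr.2 = 1 - b := by rw [← hz pr.2 (by omega)]; exact h2
          exact ⟨hc, hB2, by omega, h2'⟩
        · right
          have hc2 : pr.2 ≠ k₀ := by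
            intro h
            rw [h, hzk] at h2
            exact hbb h2.symm
          have h1' : x pr.1 = b := by rw [← hz pr.1 hc]; exact h1
          have h2' : x pr.2 = 1 - b := by rw [← hz pr.2 hc2]; exact h2
          exact ⟨⟨hB1, hB2⟩, ⟨hc, hc2⟩, hlt, h1', h2'⟩
      · rintro (⟨h1, h2, h3, h4⟩ | ⟨⟨hB1, hB2⟩, ⟨hc1, hc2⟩, hlt, h1, h2⟩)
        · refine ⟨⟨?_, h2⟩, by omega, ?_, ?_⟩
          · rw [h1]; omega
          · rw [h1]; exact hzk
          · rw [hz pr.2 (by omega)]; exact h4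
        · exact ⟨⟨hB1, hB2⟩, hlt, by rw [hz pr.1 hc1]; exact h1, by rw [hz pr.2 hc2]; exact h2⟩
    rw [split, Finset.card_union_of_disjoint, Finset.card_product, Finset.card_singleton, one_mul]
    rw [Finset.disjoint_left]
    rintro pr hpr1 hpr2
    simp only [Finset.mem_product, Finset.mem_singleton] at hpr1
    simp only [Finset.mem_filter] at hpr2
    exact hpr2.2.1.1 hpr1.1
  have maina : ∀ z : ℤ → ℤ, (∀ l, l ≠ k₀ → z l = x l) → z k₀ = 1 - b →
      ((B ×ˢ B).filter (fun pr : ℤ × ℤ => pr.1 < pr.2 ∧ z pr.1 = b ∧ z pr.2 = 1 - b)).card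
        = Bc + Cc := by
    intro z hz hzk
    have split : (B ×ˢ B).filter (fun pr : ℤ × ℤ => pr.1 < pr.2 ∧ z pr.1 = b ∧ z pr.2 = 1 - b)
        = ((B.filter (fun j => j < k₀ ∧ x j = b)) ×ˢ ({k₀} : Finset ℤ))
          ∪ ((B ×ˢ B).filter
            (fun pr : ℤ × ℤ => (pr.1 ≠ k₀ ∧ pr.2 ≠ k₀) ∧ pr.1 < pr.2 ∧ x pr.1 = b ∧ x pr.2 = 1 - b)) := by
      ext pr
      simp only [Finset.mem_filter, Finset.mem_union, Finset.mem_product, Finset.mem_singleton,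
        Finset.mem_Icc, hB]
      constructor
      · rintro ⟨⟨hB1, hB2⟩, hlt, h1, h2⟩
        by_cases hc : pr.2 = k₀
        · left
          have h1' : x pr.1 = b := by rw [← hz pr.1 (by omega)]; exact h1
          exact ⟨⟨hB1, by omega⟩, hc⟩
        · right
          have hc1 : pr.1 ≠ k₀ := by
            intro h
            rw [h, hzk] at h1
            exact hbb h1
          have h1' : x pr.1 = b := by rw [← hz pr.1 hc1]; exact h1
          have h2' : x pr.2 = 1 - b := by rw [← hz pr.2 hc]; exact h2
          exact ⟨⟨hB1, hB2⟩, ⟨hc1, hc⟩, hlt, h1', h2'⟩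
      · rintro (⟨⟨⟨hl1, hl2⟩, h3, h4⟩, h1⟩ | ⟨⟨hB1, hB2⟩, ⟨hc1, hc2⟩, hlt, h1, h2⟩)
        · refine ⟨⟨⟨hl1, hl2⟩, ?_⟩, by omega, ?_, ?_⟩
          · rw [h1]; omega
          · rw [hz pr.1 (by omega)]; exact h4
          · rw [h1]; exact hzk
        · exact ⟨⟨hB1, hB2⟩, hlt, by rw [hz pr.1 hc1]; exact h1, by rw [hz pr.2 hc2]; exact h2⟩
    rw [split, Finset.card_union_of_disjoint, Finset.card_product, Finset.card_singleton, mul_one]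
    rw [Finset.disjoint_left]
    rintro pr hpr1 hpr2
    simp only [Finset.mem_product, Finset.mem_singleton, Finset.mem_filter] at hpr1
    simp only [Finset.mem_filter] at hpr2
    exact hpr2.2.1.2 hpr1.2
  have hS : Sfun x k₀ = (Bc : ℤ) - (Ac : ℤ) := by
    rw [Sfun, kx]
    congr 2
    · apply natCard_eq_card
      intro l
      simp only [Finset.mem_filter, Finset.mem_Icc, hB]
      constructor
      · rintro ⟨h1, h2⟩
        exact ⟨⟨hxb1 l h2, by omega⟩, h1, h2⟩
      · rintro ⟨_, h⟩; exact h
    · apply natCard_eq_card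
      intro l
      simp only [Finset.mem_filter, Finset.mem_Icc, hB]
      constructor
      · rintro ⟨h1, h2⟩
        exact ⟨⟨by omega, hxb2 l h2⟩, h1, h2⟩
      · rintro ⟨_, h⟩; exact h
  rcases hv k₀ with hk | hk
  · have e1 : fCD x = Ac + Cc := by rw [repx]; exact mainb x (fun l _ => rfl) hk
    have hx'kb : x' k₀ = 1 - b := by rw [hx'k, hk]
    have e2 : fCD x' = Bc + Cc := by rw [repx']; exact maina x' hx'ne hx'kb
    rw [e1, e2, if_pos hk, hS]
    push_cast
    ring
  · have hknb : ¬ (x k₀ = b) := by rw [hk]; exact hbb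
    have e1 : fCD x = Bc + Cc := by rw [repx]; exact maina x (fun l _ => rfl) hk
    have hx'kb : x' k₀ = b := by rw [hx'k, hk]; ring
    have e2 : fCD x' = Ac + Cc := by rw [repx']; exact mainb x' hx'ne hx'kb
    rw [e1, e2, if_neg hknb, hS]
    push_cast
    ring

end Flip
section Swap

attribute [local instance] Classical.propDecidable

theorem fCD_swap (x : ℤ → ℤ) (b N M : ℤ) (hNM : N ≤ M)
    (hNa : ∀ k ≤ N, x k = 1 - b) (hMb : ∀ k, M ≤ k → x k = b) (k₀ : ℤ) :
    (fCD (swapAt x k₀) : ℤ) - (fCD x : ℤ)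
      = (if x (k₀+1) = b ∧ x k₀ = 1 - b then 1 else 0)
        - (if x k₀ = b ∧ x (k₀+1) = 1 - b then 1 else 0) := by
  have hbb : (1:ℤ) - b ≠ b := by omega
  set τ : ℤ → ℤ := fun j => if j = k₀ then k₀+1 else if j = k₀+1 then k₀ else j with hτ
  set x'' := swapAt x k₀ with hx''def
  have hcomp : ∀ l, x'' l = x (τ l) := by
    intro l
    simp only [hτ, hx''def, swapAt]
    by_cases h1 : l = k₀
    · simp [h1]
    · by_cases h2 : l = k₀ + 1
      · simp [h1, h2]
      · simp [h1, h2]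
  have hττ : ∀ l, τ (τ l) = l := by
    intro l
    simp only [hτ]
    split_ifs <;> omega
  have hx''ne : ∀ l, l ≠ k₀ → l ≠ k₀ + 1 → x'' l = x l := by
    intro l h1 h2
    rw [hcomp]
    simp only [hτ, if_neg h1, if_neg h2]
  set lo := min N (k₀ - 1) with hlo
  set hi := max M (k₀ + 2) with hhi
  have hlok : lo ≤ k₀ - 1 := min_le_right _ _
  have hloN : lo ≤ N := min_le_left _ _
  have hhik : k₀ + 2 ≤ hi := le_max_right _ _
  have hhiM : M ≤ hi := le_max_left _ _
  have hxb1 : ∀ l, x l = b → lo ≤ l := by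
    intro l hl
    by_contra h
    push_neg at h
    rw [hNa l (by omega)] at hl
    exact hbb hl
  have hxb2 : ∀ l, x l = 1 - b → l ≤ hi := by
    intro l hl
    by_contra h
    push_neg at h
    rw [hMb l (by omega)] at hl
    exact hbb hl.symm
  have hτbnd : ∀ l, lo ≤ l → l ≤ hi → lo ≤ τ l ∧ τ l ≤ hi := by
    intro l h1 h2
    simp only [hτ]
    split_ifs <;> omega
  have hτk : τ k₀ = k₀ + 1 := by simp [hτ]
  have hτk1 : τ (k₀ + 1) = k₀ := by
    simp only [hτ]
    rw [if_neg (by omega)]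
    simp
  have hτlt : ∀ u v : ℤ, u < v → ¬(u = k₀ ∧ v = k₀ + 1) → τ u < τ v := by
    intro u v h1 h2
    simp only [hτ]
    split_ifs <;> omega
  have hτne : ∀ u v : ℤ, u < v → ¬(τ u = k₀ ∧ τ v = k₀ + 1) := by
    intro u v h1 h2
    have e1 : u = τ (τ u) := (hττ u).symm
    have e2 : v = τ (τ v) := (hττ v).symm
    rw [h2.1] at e1
    rw [h2.2] at e2
    rw [hτk] at e1
    rw [hτk1] at e2
    omega
  have hx''b1 : ∀ l, x'' l = b → lo ≤ l := by
    intro l hl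
    rw [hcomp] at hl
    have := hxb1 _ hl
    simp only [hτ] at this
    by_cases h1 : l = k₀
    · omega
    · by_cases h2 : l = k₀+1
      · omega
      · rw [if_neg h1, if_neg h2] at this; omega
  have hx''b2 : ∀ l, x'' l = 1 - b → l ≤ hi := by
    intro l hl
    rw [hcomp] at hl
    have := hxb2 _ hl
    simp only [hτ] at this
    by_cases h1 : l = k₀
    · omega
    · by_cases h2 : l = k₀+1
      · omega
      · rw [if_neg h1, if_neg h2] at this; omega
  have kx : kappa x = b :=
    kappa_eq x b (charge_eq x (1-b) b N M hNM hNa hMb)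
  have kx'' : kappa x'' = b := by
    refine kappa_eq x'' b (charge_eq x'' (1-b) b lo hi (by omega) ?_ ?_)
    · intro k hk
      rw [hx''ne k (by omega) (by omega)]
      exact hNa k (by omega)
    · intro k hk
      rw [hx''ne k (by omega) (by omega)]
      exact hMb k (by omega)
  set B := Finset.Icc lo hi with hB
  have hk₀B : k₀ ∈ B := Finset.mem_Icc.mpr ⟨by omega, by omega⟩
  have hk₁B : k₀ + 1 ∈ B := Finset.mem_Icc.mpr ⟨by omega, by omega⟩
  have repx := fCD_repr x b lo hi kx hxb1 hxb2
  have repx'' := fCD_repr x'' b lo hi kx'' hx''b1 hx''b2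
  set F : (ℤ → ℤ) → Finset (ℤ × ℤ) := fun z =>
    ((B ×ˢ B).filter (fun pr : ℤ × ℤ => pr.1 < pr.2 ∧ z pr.1 = b ∧ z pr.2 = 1 - b)) with hF
  have cardsplit : ∀ z : ℤ → ℤ, (F z).card
      = (if (k₀, k₀+1) ∈ F z then 1 else 0) + ((F z).erase (k₀, k₀+1)).card := by
    intro z
    by_cases h : (k₀, k₀+1) ∈ F z
    · rw [if_pos h, Finset.card_erase_of_mem h]
      have : 1 ≤ (F z).card := Finset.card_pos.mpr ⟨_, h⟩
      omega
    · rw [if_neg h, Finset.erase_eq_of_notMem h, zero_add]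
  have cardbij : ((F x'').erase (k₀, k₀+1)).card = ((F x).erase (k₀, k₀+1)).card := by
    apply Finset.card_bij' (fun pr _ => (τ pr.1, τ pr.2)) (fun pr _ => (τ pr.1, τ pr.2))
    · intro pr hpr
      simp only [Finset.mem_erase, hF, hB, Finset.mem_filter, Finset.mem_product, Finset.mem_Icc,
        Prod.ext_iff] at hpr ⊢
      obtain ⟨hne, ⟨⟨hb1, hb2⟩, hlt, h1, h2⟩⟩ := hpr
      rw [hcomp] at h1 h2
      have t1 := hτbnd pr.1 hb1.1 hb1.2
      have t2 := hτbnd pr.2 hb2.1 hb2.2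
      refine ⟨?_, ⟨⟨t1.1, t1.2⟩, t2.1, t2.2⟩, ?_, h1, h2⟩
      · exact fun hc => hτne pr.1 pr.2 hlt ⟨congrArg Prod.fst hc, congrArg Prod.snd hc⟩
      · exact hτlt pr.1 pr.2 hlt
          (fun hc => hne (Prod.ext_iff.mpr ⟨hc.1, hc.2⟩))
    · intro pr hpr
      simp only [Finset.mem_erase, hF, hB, Finset.mem_filter, Finset.mem_product, Finset.mem_Icc,
        Prod.ext_iff] at hpr ⊢
      obtain ⟨hne, ⟨⟨hb1, hb2⟩, hlt, h1, h2⟩⟩ := hpr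
      have t1 := hτbnd pr.1 hb1.1 hb1.2
      have t2 := hτbnd pr.2 hb2.1 hb2.2
      have e1 : x'' (τ pr.1) = x pr.1 := by rw [hcomp, hττ]
      have e2 : x'' (τ pr.2) = x pr.2 := by rw [hcomp, hττ]
      refine ⟨?_, ⟨⟨t1.1, t1.2⟩, t2.1, t2.2⟩, ?_, by rw [e1]; exact h1, by rw [e2]; exact h2⟩
      · exact fun hc => hτne pr.1 pr.2 hlt ⟨congrArg Prod.fst hc, congrArg Prod.snd hc⟩
      · exact hτlt pr.1 pr.2 hlt
          (fun hc => hne (Prod.ext_iff.mpr ⟨hc.1, hc.2⟩))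
    · intro pr _
      simp [hττ]
    · intro pr _
      simp [hττ]
  have mem1 : ((k₀, k₀+1) ∈ F x) ↔ (x k₀ = b ∧ x (k₀+1) = 1 - b) := by
    simp only [hF, Finset.mem_filter, Finset.mem_product]
    constructor
    · rintro ⟨_, _, h⟩; exact h
    · rintro ⟨h1, h2⟩; exact ⟨⟨hk₀B, hk₁B⟩, by omega, h1, h2⟩
  have mem2 : ((k₀, k₀+1) ∈ F x'') ↔ (x (k₀+1) = b ∧ x k₀ = 1 - b) := by
    simp only [hF, Finset.mem_filter, Finset.mem_product]
    have e1 : x'' k₀ = x (k₀+1) := by rw [hcomp, hτk]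
    have e2 : x'' (k₀+1) = x k₀ := by rw [hcomp, hτk1]
    constructor
    · rintro ⟨_, _, h1, h2⟩
      rw [e1] at h1; rw [e2] at h2
      exact ⟨h1, h2⟩
    · rintro ⟨h1, h2⟩
      exact ⟨⟨hk₀B, hk₁B⟩, by omega, by rw [e1]; exact h1, by rw [e2]; exact h2⟩
  rw [repx, repx'']
  rw [show ((B ×ˢ B).filter (fun pr : ℤ × ℤ => pr.1 < pr.2 ∧ x'' pr.1 = b ∧ x'' pr.2 = 1 - b)) = F x'' from rfl]
  rw [show ((B ×ˢ B).filter (fun pr : ℤ × ℤ => pr.1 < pr.2 ∧ x pr.1 = b ∧ x pr.2 = 1 - b)) = F x from rfl]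
  rw [cardsplit x, cardsplit x'', cardbij]
  by_cases c1 : x (k₀+1) = b ∧ x k₀ = 1 - b
  · rw [if_pos ((mem2).mpr c1), if_pos c1]
    have c2 : ¬ (x k₀ = b ∧ x (k₀+1) = 1 - b) := by
      rintro ⟨h1, _⟩
      rw [c1.2] at h1
      exact hbb h1
    rw [if_neg (fun h => c2 ((mem1).mp h)), if_neg c2]
    push_cast
    ring
  · rw [if_neg (fun h => c1 ((mem2).mp h)), if_neg c1]
    by_cases c2 : x k₀ = b ∧ x (k₀+1) = 1 - b
    · rw [if_pos ((mem1).mpr c2), if_pos c2]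
      push_cast
      ring
    · rw [if_neg (fun h => c2 ((mem1).mp h)), if_neg c2]
      push_cast
      ring

end Swap
section ST

attribute [local instance] Classical.propDecidable

theorem Sfun_eq (x : ℤ → ℤ) (b N M : ℤ) (kx : kappa x = b)
    (h1 : ∀ l, x l = b → N < l) (h2 : ∀ l, x l = 1 - b → l < M) (k : ℤ) :
    Sfun x k = (((Finset.Ioo N k).filter (fun l => x l = b)).card : ℤ)
      - (((Finset.Ioo k M).filter (fun l => x l = 1 - b)).card : ℤ) := by
  rw [Sfun, kx]
  congr 2
  · apply natCard_eq_card
    intro l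
    simp only [Finset.mem_filter, Finset.mem_Ioo]
    constructor
    · rintro ⟨hl, hx⟩; exact ⟨⟨h1 l hx, hl⟩, hx⟩
    · rintro ⟨⟨_, hl⟩, hx⟩; exact ⟨hl, hx⟩
  · apply natCard_eq_card
    intro l
    simp only [Finset.mem_filter, Finset.mem_Ioo]
    constructor
    · rintro ⟨hl, hx⟩; exact ⟨⟨hl, h2 l hx⟩, hx⟩
    · rintro ⟨⟨hl, _⟩, hx⟩; exact ⟨hl, hx⟩

theorem Sdiff (x : ℤ → ℤ) (b N M : ℤ) (kx : kappa x = b)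
    (h1 : ∀ l, x l = b → N < l) (h2 : ∀ l, x l = 1 - b → l < M) (k : ℤ) :
    Sfun x k - Sfun x (k-1)
      = (if x (k-1) = b then 1 else 0) + (if x k = 1 - b then 1 else 0) := by
  have e1 := Sfun_eq x b N M kx h1 h2 k
  have e2 := Sfun_eq x b N M kx h1 h2 (k-1)
  have cardW : ((Finset.Ioo N k).filter (fun l => x l = b)).card
      = ((Finset.Ioo N (k-1)).filter (fun l => x l = b)).card
        + (if x (k-1) = b then 1 else 0) := by
    by_cases h : x (k-1) = b
    · rw [if_pos h]
      have hsplit : (Finset.Ioo N k).filter (fun l => x l = b)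
          = insert (k-1) ((Finset.Ioo N (k-1)).filter (fun l => x l = b)) := by
        ext l
        simp only [Finset.mem_insert, Finset.mem_filter, Finset.mem_Ioo]
        constructor
        · rintro ⟨⟨hl1, hl2⟩, hx⟩
          by_cases hc : l = k-1
          · exact Or.inl hc
          · exact Or.inr ⟨⟨hl1, by omega⟩, hx⟩
        · rintro (hc | ⟨⟨hl1, hl2⟩, hx⟩)
          · subst hc; exact ⟨⟨h1 _ h, by omega⟩, h⟩
          · exact ⟨⟨hl1, by omega⟩, hx⟩
      rw [hsplit, Finset.card_insert_of_notMem (by simp [Finset.mem_Ioo])]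
    · rw [if_neg h, add_zero]
      congr 1
      ext l
      simp only [Finset.mem_filter, Finset.mem_Ioo]
      constructor
      · rintro ⟨⟨hl1, hl2⟩, hx⟩
        have : l ≠ k - 1 := fun hc => h (hc ▸ hx)
        exact ⟨⟨hl1, by omega⟩, hx⟩
      · rintro ⟨⟨hl1, hl2⟩, hx⟩
        exact ⟨⟨hl1, by omega⟩, hx⟩
  have cardR : ((Finset.Ioo (k-1) M).filter (fun l => x l = 1 - b)).card
      = ((Finset.Ioo k M).filter (fun l => x l = 1 - b)).card
        + (if x k = 1 - b then 1 else 0) := by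
    by_cases h : x k = 1 - b
    · rw [if_pos h]
      have hsplit : (Finset.Ioo (k-1) M).filter (fun l => x l = 1 - b)
          = insert k ((Finset.Ioo k M).filter (fun l => x l = 1 - b)) := by
        ext l
        simp only [Finset.mem_insert, Finset.mem_filter, Finset.mem_Ioo]
        constructor
        · rintro ⟨⟨hl1, hl2⟩, hx⟩
          by_cases hc : l = k
          · exact Or.inl hc
          · exact Or.inr ⟨⟨by omega, hl2⟩, hx⟩
        · rintro (hc | ⟨⟨hl1, hl2⟩, hx⟩)
          · subst hc; exact ⟨⟨by omega, h2 _ h⟩, h⟩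
          · exact ⟨⟨by omega, hl2⟩, hx⟩
      rw [hsplit, Finset.card_insert_of_notMem (by simp [Finset.mem_Ioo])]
    · rw [if_neg h, add_zero]
      congr 1
      ext l
      simp only [Finset.mem_filter, Finset.mem_Ioo]
      constructor
      · rintro ⟨⟨hl1, hl2⟩, hx⟩
        have : l ≠ k := fun hc => h (hc ▸ hx)
        exact ⟨⟨by omega, hl2⟩, hx⟩
      · rintro ⟨⟨hl1, hl2⟩, hx⟩
        exact ⟨⟨by omega, hl2⟩, hx⟩
  rw [e1, e2, cardW, cardR]
  push_cast
  ring

theorem Tstep (x : ℤ → ℤ) (b N M : ℤ) (kx : kappa x = b) (hb : b = 0 ∨ b = 1)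
    (h1 : ∀ l, x l = b → N < l) (h2 : ∀ l, x l = 1 - b → l < M)
    (hv : ∀ l, x l = b ∨ x l = 1 - b) (k : ℤ) :
    (Sfun x k - (if x k = 1 - b then 1 else 0))
      = (Sfun x (k-1) - (if x (k-1) = 1 - b then 1 else 0)) + 1 := by
  have hbb : (1:ℤ) - b ≠ b := by omega
  have hd := Sdiff x b N M kx h1 h2 k
  rcases hv (k-1) with h | h
  · have e0 : (if x (k-1) = b then (1:ℤ) else 0) = 1 := if_pos h
    have e1 : (if x (k-1) = 1 - b then (1:ℤ) else 0) = 0 :=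
      if_neg (by rw [h]; exact fun hc => hbb hc.symm)
    rw [e0] at hd
    rw [e1]
    omega
  · have e0 : (if x (k-1) = b then (1:ℤ) else 0) = 0 := if_neg (by rw [h]; exact hbb)
    have e1 : (if x (k-1) = 1 - b then (1:ℤ) else 0) = 1 := if_pos h
    rw [e0] at hd
    rw [e1]
    omega

theorem Taffine (x : ℤ → ℤ) (b N M : ℤ) (kx : kappa x = b) (hb : b = 0 ∨ b = 1)
    (h1 : ∀ l, x l = b → N < l) (h2 : ∀ l, x l = 1 - b → l < M)
    (hv : ∀ l, x l = b ∨ x l = 1 - b) (k l : ℤ) :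
    (Sfun x l - (if x l = 1 - b then 1 else 0))
      = (Sfun x k - (if x k = 1 - b then 1 else 0)) + (l - k) := by
  set T : ℤ → ℤ := fun j => Sfun x j - (if x j = 1 - b then 1 else 0) with hT
  have hstep : ∀ j : ℤ, T j = T (j-1) + 1 := fun j => Tstep x b N M kx hb h1 h2 hv j
  have key : ∀ j : ℤ, T j - j = T 0 := by
    intro j
    induction j using Int.induction_on with
    | zero => simp
    | succ i ih =>
      have := hstep (i+1)
      have e : (i:ℤ) + 1 - 1 = i := by ring
      rw [e] at this
      omega
    | pred i ih =>
      have := hstep (-(i:ℤ))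
      have e : -(i:ℤ) - 1 = -(i:ℤ) - 1 := rfl
      omega
  have k1 := key k
  have k2 := key l
  show T l = T k + (l - k)
  omega

end ST
section IfaceSec

attribute [local instance] Classical.propDecidable

noncomputable def Iface (x : ℤ → ℤ) (N M : ℤ) : Finset ℤ :=
  (Finset.Icc (N+1) M).filter (fun k => ¬ (x (k-1) = x k))

theorem mem_Iface (x : ℤ → ℤ) (b N M : ℤ)
    (hNa : ∀ k ≤ N, x k = 1 - b) (hMb : ∀ k, M ≤ k → x k = b) (k : ℤ) :
    k ∈ Iface x N M ↔ ¬ (x (k-1) = x k) := by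
  simp only [Iface, Finset.mem_filter, Finset.mem_Icc]
  constructor
  · rintro ⟨_, h⟩; exact h
  · intro h
    refine ⟨⟨?_, ?_⟩, h⟩
    · by_contra hc
      push_neg at hc
      exact h (by rw [hNa (k-1) (by omega), hNa k (by omega)])
    · by_contra hc
      push_neg at hc
      exact h (by rw [hMb (k-1) (by omega), hMb k (by omega)])

theorem pnum_eq (x : ℤ → ℤ) (b N M : ℤ) (hb : b = 0 ∨ b = 1)
    (hNa : ∀ k ≤ N, x k = 1 - b) (hMb : ∀ k, M ≤ k → x k = b)
    (hv : ∀ l, x l = b ∨ x l = 1 - b) :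
    pnum (itf x) = ((Iface x N M).card : ℤ) := by
  have hsupp : Function.support (fun i => |itf x i|) ⊆ ↑(Iface x N M) := by
    intro i hi
    simp only [Function.mem_support, itf] at hi
    have : ¬ (x (i-1) = x i) := fun h => hi (by rw [h]; simp)
    exact Finset.mem_coe.mpr ((mem_Iface x b N M hNa hMb i).mpr this)
  rw [pnum, finsum_eq_finset_sum_of_support_subset _ hsupp]
  have : ∀ i ∈ Iface x N M, |itf x i| = 1 := by
    intro i hi
    have hne := (mem_Iface x b N M hNa hMb i).mp hi
    rcases hv i with h1 | h1 <;> rcases hv (i-1) with h2 | h2 <;>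
      simp only [itf, h1, h2] <;> first
      | (exact absurd (h2.trans h1.symm) hne)
      | (rcases hb with hb | hb <;> subst hb <;> norm_num)
  rw [Finset.sum_congr rfl this]
  simp

end IfaceSec
section GflipSec

attribute [local instance] Classical.propDecidable

theorem count_odd (m : ℕ) :
    ∑ r ∈ Finset.range m, (if r % 2 = 0 then (0:ℝ) else 1) = ((m / 2 : ℕ) : ℝ) := by
  induction m with
  | zero => simp
  | succ m ih =>
    rw [Finset.sum_range_succ, ih]
    by_cases h : m % 2 = 0
    · rw [if_pos h, add_zero]
      have : (m+1)/2 = m/2 := by omega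
      rw [this]
    · rw [if_neg h]
      have : (m+1)/2 = m/2 + 1 := by omega
      rw [this]
      push_cast
      ring

theorem Gflip_bound (x : ℤ → ℤ) (b N M : ℤ) (hNM : N ≤ M)
    (hNa : ∀ k ≤ N, x k = 1 - b) (hMb : ∀ k, M ≤ k → x k = b)
    (hb : b = 0 ∨ b = 1) (hv : ∀ l, x l = b ∨ x l = 1 - b)
    (p q : ℤ → ℝ) (hp : ∀ k, 0 ≤ p k) (hq : ∀ k, 0 ≤ q k)
    (hrate0 : ∀ k, x (k - 1) = x k → p k = 0 ∧ q k = 0)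
    (sbar : ℝ) (hsbar : 0 < sbar)
    (hlow : ∀ k, x (k - 1) ≠ x k → sbar ≤ p k + q k)
    (hA4a : ∀ k l : ℤ, k < l → x (k - 1) ≠ x k → x (l - 1) ≠ x l →
      (∀ m, k ≤ m → m < l → x m = x k) → q k + p l ≤ p k + q l) :
    Gflip p q x ≤ sbar - sbar * ((Iface x N M).card : ℝ) / 2 := by
  have hbb : (1:ℤ) - b ≠ b := by omega
  have hvne : ∀ l, ¬ (x l = b) → x l = 1 - b := fun l h => (hv l).resolve_left h
  have kx : kappa x = b := kappa_eq x b (charge_eq x (1-b) b N M hNM hNa hMb)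
  have h1 : ∀ l, x l = b → N < l := by
    intro l hl
    by_contra h
    rw [hNa l (by omega)] at hl
    exact hbb hl
  have h2 : ∀ l, x l = 1 - b → l < M := by
    intro l hl
    by_contra h
    rw [hMb l (by omega)] at hl
    exact hbb hl.symm
  have memI := mem_Iface x b N M hNa hMb
  set I := Iface x N M with hIdef
  have hIbnd : ∀ k ∈ I, N + 1 ≤ k ∧ k ≤ M := by
    intro k hk
    rw [hIdef, Iface, Finset.mem_filter, Finset.mem_Icc] at hk
    exact hk.1
  set n := I.card with hndef
  set e := I.orderIsoOfFin hndef.symm with hedef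
  set E : ℕ → ℤ := fun r => if h : r < n then ((e ⟨r, h⟩ : {k // k ∈ I}) : ℤ) else 0 with hEdef
  have hEeq : ∀ r (h : r < n), E r = ((e ⟨r, h⟩ : {k // k ∈ I}) : ℤ) := fun r h => dif_pos h
  have hEmem : ∀ r, r < n → E r ∈ I := by
    intro r h
    rw [hEeq r h]
    exact (e ⟨r, h⟩).2
  have hEmono : ∀ r s, s < n → r < s → E r < E s := by
    intro r s hs hr
    rw [hEeq r (lt_trans hr hs), hEeq s hs]
    have := e.strictMono (show (⟨r, lt_trans hr hs⟩ : Fin n) < ⟨s, hs⟩ from hr)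
    exact this
  have hEmono' : ∀ r s, r < n → s < n → E r < E s → r < s := by
    intro r s hr hs hE
    by_contra h
    push_neg at h
    rcases Nat.lt_or_ge s r with h' | h'
    · exact absurd (hEmono s r hr h') (by omega)
    · have : r = s := by omega
      subst this
      omega
  have hEsurj : ∀ k, k ∈ I → ∃ r, ∃ h : r < n, E r = k := by
    intro k hk
    obtain ⟨r, hr⟩ := e.surjective ⟨k, hk⟩
    refine ⟨r.1, r.2, ?_⟩
    rw [hEeq r.1 r.2]
    rw [show (⟨r.1, r.2⟩ : Fin n) = r from Fin.eta r r.2, hr]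
  have hEgap : ∀ r k, r + 1 < n → k ∈ I → E r < k → k < E (r+1) → False := by
    intro r k hr hk hk1 hk2
    obtain ⟨s, hs, hEs⟩ := hEsurj k hk
    rw [← hEs] at hk1 hk2
    have := hEmono' r s (by omega) hs hk1
    have := hEmono' s (r+1) hs hr hk2
    omega
  have hstretch : ∀ k l, k ≤ l → (∀ m, k < m → m ≤ l → m ∉ I) → x k = x l := by
    intro k l hkl h
    exact stretch x k l hkl (fun m hm1 hm2 => by
      by_contra hc
      exact h m hm1 hm2 ((memI m).mpr hc))
  have hnpos : 0 < n := by
    by_contra h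
    have hIe : I = ∅ := Finset.card_eq_zero.mp (by omega)
    have := hstretch N M hNM (fun m _ _ hm => by rw [hIe] at hm; exact absurd hm (Finset.notMem_empty m))
    rw [hNa N le_rfl, hMb M le_rfl] at this
    exact hbb this
  have hEmin : ∀ k, k ∈ I → E 0 ≤ k := by
    intro k hk
    obtain ⟨r, hr, hEr⟩ := hEsurj k hk
    rcases Nat.eq_zero_or_pos r with h | h
    · subst h; omega
    · have := hEmono 0 r hr h; omega
  have hEmax : ∀ k, k ∈ I → k ≤ E (n-1) := by
    intro k hk
    obtain ⟨r, hr, hEr⟩ := hEsurj k hk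
    rcases Nat.lt_or_ge r (n-1) with h | h
    · have := hEmono r (n-1) (by omega) h; omega
    · have : r = n - 1 := by omega
      subst this; omega
  have hleft : ∀ j, j < E 0 → x j = 1 - b := by
    intro j hj
    by_cases hjN : j ≤ N
    · exact hNa j hjN
    · have : x N = x j := hstretch N j (by omega)
        (fun m hm1 hm2 hm => by have := hEmin m hm; omega)
      rw [hNa N le_rfl] at this
      exact this.symm
  have hright : ∀ j, E (n-1) ≤ j → x j = b := by
    intro j hj
    by_cases hjM : M ≤ j
    · exact hMb j hjM
    · have : x j = x M := hstretch j M (by omega)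
        (fun m hm1 hm2 hm => by have := hEmax m hm; omega)
      rw [hMb M le_rfl] at this
      exact this
  have hconst : ∀ r, r + 1 < n → ∀ m, E r ≤ m → m < E (r+1) → x m = x (E r) := by
    intro r hr m hm1 hm2
    exact (hstretch (E r) m hm1 (fun m' hm1' hm2' hm' =>
      hEgap r m' hr hm' hm1' (by omega))).symm
  have halt : ∀ r, r < n → x (E r) = (if r % 2 = 0 then b else 1 - b) := by
    intro r
    induction r with
    | zero =>
      intro h
      have hne : x (E 0 - 1) ≠ x (E 0) := (memI _).mp (hEmem 0 h)
      have hl : x (E 0 - 1) = 1 - b := hleft _ (by omega)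
      have hxe : x (E 0) = b := by
        rcases hv (E 0) with hc | hc
        · exact hc
        · exact absurd (hl.trans hc.symm) hne
      simpa using hxe
    | succ r ih =>
      intro h
      have hr : r < n := by omega
      have ihr := ih hr
      have hx1 : x (E (r+1) - 1) = x (E r) := by
        have := hconst r h (E (r+1) - 1) (by have := hEmono r (r+1) h (by omega); omega) (by omega)
        exact this
      have hne : x (E (r+1) - 1) ≠ x (E (r+1)) := (memI _).mp (hEmem (r+1) h)
      rw [hx1] at hne
      by_cases hp2 : r % 2 = 0
      · rw [if_pos hp2] at ihr
        rw [if_neg (by omega)]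
        rw [ihr] at hne
        exact hvne _ (fun hc => hne hc.symm)
      · rw [if_neg hp2] at ihr
        rw [if_pos (by omega)]
        rw [ihr] at hne
        exact (hv _).resolve_right (fun hc => hne hc.symm)
  have hlast : x (E (n-1)) = b := hright (E (n-1)) le_rfl
  have hnodd : (n-1) % 2 = 0 := by
    by_contra hc
    have := halt (n-1) (by omega)
    rw [if_neg hc, hlast] at this
    exact hbb this.symm
  -- T function and affinity
  set T : ℤ → ℤ := fun j => Sfun x j - (if x j = 1 - b then 1 else 0) with hTdef
  have hTaff : ∀ k l : ℤ, T l = T k + (l - k) := fun k l =>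
    Taffine x b N M kx hb h1 h2 hv k l
  -- gap sums
  set GS : ℕ → ℤ := fun m => ∑ s ∈ Finset.range m,
    (if s % 2 = 1 then (E (s+1) - E s) else 0) with hGSdef
  have hGSsucc : ∀ m, GS (m+1) = GS m + (if m % 2 = 1 then (E (m+1) - E m) else 0) := by
    intro m
    rw [hGSdef]
    exact Finset.sum_range_succ _ m
  have hGSmono : ∀ m m', m ≤ m' → m' ≤ n - 1 → GS m ≤ GS m' := by
    intro m m' hmm hm'
    rw [hGSdef]
    apply Finset.sum_le_sum_of_subset_of_nonneg
    · exact Finset.range_subset_range.mpr hmm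
    · intro s hs _
      rw [Finset.mem_range] at hs
      by_cases hc : s % 2 = 1
      · rw [if_pos hc]
        have := hEmono s (s+1) (by omega) (by omega)
        omega
      · rw [if_neg hc]
  -- Rt counts and telescoping
  set Rt : ℤ → ℕ := fun j => ((Finset.Ico j M).filter (fun l => x l = 1 - b)).card with hRtdef
  have hRtlast : Rt (E (n-1)) = 0 := by
    rw [hRtdef]
    simp only []
    rw [Finset.card_eq_zero, Finset.filter_eq_empty_iff]
    intro l hl
    rw [Finset.mem_Ico] at hl
    rw [hright l hl.1]
    exact fun hc => hbb hc.symm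
  have hRtstep : ∀ r, r + 1 < n → (Rt (E r) : ℤ)
      = (Rt (E (r+1)) : ℤ) + (if r % 2 = 1 then (E (r+1) - E r) else 0) := by
    intro r hr
    have hlt : E r < E (r+1) := hEmono r (r+1) hr (by omega)
    have hle2 : E (r+1) ≤ M := (hIbnd _ (hEmem (r+1) hr)).2
    have hsplit : Finset.Ico (E r) M = Finset.Ico (E r) (E (r+1)) ∪ Finset.Ico (E (r+1)) M :=
      (Finset.Ico_union_Ico_eq_Ico (le_of_lt hlt) hle2).symm
    have hdisj : Disjoint ((Finset.Ico (E r) (E (r+1))).filter (fun l => x l = 1 - b))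
        ((Finset.Ico (E (r+1)) M).filter (fun l => x l = 1 - b)) := by
      apply Finset.disjoint_filter_filter
      exact Finset.Ico_disjoint_Ico_consecutive _ _ _
    have hcard : Rt (E r) = ((Finset.Ico (E r) (E (r+1))).filter (fun l => x l = 1 - b)).card
        + Rt (E (r+1)) := by
      rw [hRtdef]
      simp only []
      rw [hsplit, Finset.filter_union, Finset.card_union_of_disjoint hdisj]
    have hfirst : (((Finset.Ico (E r) (E (r+1))).filter (fun l => x l = 1 - b)).card : ℤ)
        = (if r % 2 = 1 then (E (r+1) - E r) else 0) := by
      by_cases hc : r % 2 = 1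
      · rw [if_pos hc]
        have hxr : x (E r) = 1 - b := by
          have := halt r (by omega)
          rw [if_neg (by omega)] at this
          exact this
        have : (Finset.Ico (E r) (E (r+1))).filter (fun l => x l = 1 - b)
            = Finset.Ico (E r) (E (r+1)) := by
          rw [Finset.filter_eq_self]
          intro l hl
          rw [Finset.mem_Ico] at hl
          rw [hconst r hr l hl.1 hl.2, hxr]
        rw [this, Int.card_Ico]
        rw [Int.toNat_of_nonneg (by omega)]
      · rw [if_neg hc]
        have hxr : x (E r) = b := by
          have := halt r (by omega)
          rw [if_pos (by omega)] at this
          exact this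
        have : (Finset.Ico (E r) (E (r+1))).filter (fun l => x l = 1 - b) = ∅ := by
          rw [Finset.filter_eq_empty_iff]
          intro l hl
          rw [Finset.mem_Ico] at hl
          rw [hconst r hr l hl.1 hl.2, hxr]
          exact fun hcc => hbb hcc.symm
        rw [this]
        simp
    rw [hcard]
    push_cast
    omega
  have hRtinv : ∀ j, j < n → (Rt (E j) : ℤ) + GS j = (Rt (E 0) : ℤ) := by
    intro j
    induction j with
    | zero =>
      intro _
      rw [hGSdef]
      simp
    | succ j ih =>
      intro hj
      have := ih (by omega)
      rw [hGSsucc j]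
      have hstep := hRtstep j hj
      omega
  have hRtE0 : (Rt (E 0) : ℤ) = GS (n-1) := by
    have := hRtinv (n-1) (by omega)
    rw [hRtlast] at this
    push_cast at this
    omega
  have hTE0 : T (E 0) = - GS (n-1) := by
    have hxE0 : x (E 0) = b := by
      have := halt 0 hnpos
      simpa using this
    have hTeq : T (E 0) = Sfun x (E 0) := by
      rw [hTdef]
      simp only []
      rw [if_neg (by rw [hxE0]; exact fun hc => hbb hc.symm)]
      ring
    have hW : ((Finset.Ioo N (E 0)).filter (fun l => x l = b)) = ∅ := by
      rw [Finset.filter_eq_empty_iff]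
      intro l hl
      rw [Finset.mem_Ioo] at hl
      rw [hleft l hl.2]
      exact hbb
    have hR : ((Finset.Ioo (E 0) M).filter (fun l => x l = 1 - b))
        = ((Finset.Ico (E 0) M).filter (fun l => x l = 1 - b)) := by
      ext l
      simp only [Finset.mem_filter, Finset.mem_Ioo, Finset.mem_Ico]
      constructor
      · rintro ⟨⟨ha1, ha2⟩, hxx⟩
        exact ⟨⟨by omega, ha2⟩, hxx⟩
      · rintro ⟨⟨ha1, ha2⟩, hxx⟩
        have : l ≠ E 0 := by
          intro hc
          rw [hc, hxE0] at hxx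
          exact hbb hxx.symm
        exact ⟨⟨by omega, ha2⟩, hxx⟩
    rw [hTeq, Sfun_eq x b N M kx h1 h2 (E 0), hW, hR]
    have : (((Finset.Ico (E 0) M).filter (fun l => x l = 1 - b)).card : ℤ) = GS (n-1) := by
      rw [← hRtE0, hRtdef]
    rw [this]
    simp
  -- the alternating partial sums U
  set U : ℕ → ℤ := fun m => ∑ r ∈ Finset.range m,
    (if r % 2 = 0 then T (E r) else - T (E r)) with hUdef
  have hUsucc : ∀ m, U (m+1) = U m + (if m % 2 = 0 then T (E m) else - T (E m)) := by
    intro m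
    rw [hUdef]
    exact Finset.sum_range_succ _ m
  have hTgap : ∀ r : ℕ, T (E (r+1)) - T (E r) = E (r+1) - E r := by
    intro r
    have := hTaff (E r) (E (r+1))
    omega
  have hUodd : ∀ j, 2*j + 1 ≤ n → U (2*j+1) = T (E 0) + GS (2*j) := by
    intro j
    induction j with
    | zero =>
      intro _
      rw [show 2*0+1 = 0+1 by omega, hUsucc 0, hGSdef]
      simp [hUdef]
    | succ j ih =>
      intro hj
      have ihj := ih (by omega)
      have e1 : 2*(j+1)+1 = (2*j+1+1)+1 := by omega
      rw [e1, hUsucc (2*j+1+1), hUsucc (2*j+1)]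
      rw [if_neg (by omega), if_pos (by omega)]
      have e2 : 2*(j+1) = (2*j+1)+1 := by omega
      rw [e2, hGSsucc (2*j+1), hGSsucc (2*j)]
      rw [if_neg (by omega), if_pos (by omega)]
      have hg := hTgap (2*j+1)
      have e3 : 2*j+1+1 = 2*j+2 := by omega
      rw [e3] at *
      omega
  have hUeven : ∀ j, 2*j ≤ n → U (2*j) ≤ 0 := by
    intro j
    induction j with
    | zero =>
      intro _
      rw [show 2*0 = 0 by omega, hUdef]
      simp
    | succ j ih =>
      intro hj
      have ihj := ih (by omega)
      have e1 : 2*(j+1) = (2*j+1)+1 := by omega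
      rw [e1, hUsucc (2*j+1), hUsucc (2*j)]
      rw [if_pos (by omega), if_neg (by omega)]
      have hg := hTgap (2*j)
      have hm := hEmono (2*j) (2*j+1) (by omega) (by omega)
      have e3 : 2*j+1 = 2*j+1 := rfl
      omega
  have hUn : U n = 0 := by
    obtain ⟨h, hh⟩ : ∃ h, n = 2*h + 1 := ⟨(n-1)/2, by omega⟩
    rw [hh, hUodd h (by omega), hTE0]
    have : 2*h = n - 1 := by omega
    rw [this]
    ring
  have hUle : ∀ m, m ≤ n → U m ≤ 0 := by
    intro m hm
    rcases Nat.even_or_odd m with ⟨j, hj⟩ | ⟨j, hj⟩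
    · have : m = 2*j := by omega
      rw [this]
      exact hUeven j (by omega)
    · have : m = 2*j+1 := by omega
      rw [this, hUodd j (by omega), hTE0]
      have := hGSmono (2*j) (n-1) (by omega) (by omega)
      omega
  -- Abel summation: V ≤ 0
  set g : ℕ → ℝ := fun r => (if r % 2 = 0 then (1:ℝ) else -1) * ((T (E r) : ℤ) : ℝ) with hgdef
  have hgU : ∀ m, ∑ r ∈ Finset.range m, g r = ((U m : ℤ) : ℝ) := by
    intro m
    rw [hUdef]
    push_cast
    apply Finset.sum_congr rfl
    intro r _
    by_cases hr : r % 2 = 0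
    · rw [hgdef]; simp only [if_pos hr]; ring
    · rw [hgdef]; simp only [if_neg hr]; push_cast; ring
  set cc : ℕ → ℝ := fun r => p (E r) - q (E r) with hccdef
  have hccmono : ∀ r, r + 1 < n → cc (r+1) ≤ cc r := by
    intro r hr
    have ha := hA4a (E r) (E (r+1)) (hEmono r (r+1) hr (by omega))
      ((memI _).mp (hEmem r (by omega))) ((memI _).mp (hEmem (r+1) hr))
      (hconst r hr)
    rw [hccdef]
    simp only []
    linarith
  have hV : ∑ r ∈ Finset.range n, cc r * g r ≤ 0 := by
    have habel := Finset.sum_range_by_parts cc g n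
    simp only [smul_eq_mul] at habel
    rw [habel, hgU n, hUn]
    push_cast
    rw [mul_zero, zero_sub, neg_nonpos]
    apply Finset.sum_nonneg
    intro i hi
    rw [Finset.mem_range] at hi
    rw [hgU (i+1)]
    have hc1 : cc (i+1) - cc i ≤ 0 := by
      have := hccmono i (by omega)
      linarith
    have hc2 : ((U (i+1) : ℤ) : ℝ) ≤ 0 := by
      have := hUle (i+1) (by omega)
      exact_mod_cast Int.cast_nonpos.mpr this
    nlinarith
  -- rewrite Gflip as a finite sum over interface points
  set D : ℤ → ℝ := fun k => (fCD (flipAt x k) : ℝ) - (fCD x : ℝ) with hDdef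
  have hDflip : ∀ k : ℤ, D k = (if x k = b then (1:ℝ) else -1) * ((Sfun x k : ℤ) : ℝ) := by
    intro k
    have hf := fCD_flip x b N M hNM hNa hMb hb hv k
    rw [hDdef]
    by_cases hc : x k = b
    · rw [if_pos hc] at hf ⊢
      have : ((fCD (flipAt x k) : ℤ) : ℝ) - ((fCD x : ℤ) : ℝ) = ((1 * Sfun x k : ℤ) : ℝ) := by
        rw [← Int.cast_sub, hf]
      push_cast at this ⊢
      linarith
    · rw [if_neg hc] at hf ⊢
      have : ((fCD (flipAt x k) : ℤ) : ℝ) - ((fCD x : ℤ) : ℝ) = (((-1) * Sfun x k : ℤ) : ℝ) := by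
        rw [← Int.cast_sub, hf]
      push_cast at this ⊢
      linarith
  set J : Finset ℤ := I ∪ I.image (fun k => k - 1) with hJdef
  have hGf : Gflip p q x = ∑ k ∈ J, (p k + q (k+1)) * D k := by
    have : Gflip p q x = ∑ᶠ (k : ℤ), (p k + q (k+1)) * D k := rfl
    rw [this]
    apply finsum_eq_finset_sum_of_support_subset
    intro k hk
    simp only [Function.mem_support] at hk
    have hw : ¬ (p k + q (k+1) = 0) := fun h => hk (by rw [h, zero_mul])
    by_cases hpk : p k = 0
    · have hqk : ¬ (q (k+1) = 0) := fun h => hw (by rw [hpk, h, add_zero])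
      have hxx : ¬ (x ((k+1)-1) = x (k+1)) := fun h => hqk (hrate0 (k+1) h).2
      have hk1I : k + 1 ∈ I := (memI (k+1)).mpr hxx
      have : k ∈ I.image (fun k => k - 1) := Finset.mem_image.mpr ⟨k+1, hk1I, by ring⟩
      exact Finset.mem_coe.mpr (Finset.mem_union_right _ this)
    · have hxx : ¬ (x (k-1) = x k) := fun h => hpk (hrate0 k h).1
      exact Finset.mem_coe.mpr (Finset.mem_union_left _ ((memI k).mpr hxx))
  have hq0 : ∀ k, k ∉ I → q k = 0 := by
    intro k hk
    exact (hrate0 k (not_not.mp (fun hc => hk ((memI k).mpr hc)))).2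
  have hp0 : ∀ k, k ∉ I → p k = 0 := by
    intro k hk
    exact (hrate0 k (not_not.mp (fun hc => hk ((memI k).mpr hc)))).1
  have hsplitJ : ∑ k ∈ J, (p k + q (k+1)) * D k
      = ∑ k ∈ I, p k * D k + ∑ k ∈ I, q k * D (k-1) := by
    have e1 : ∑ k ∈ J, (p k + q (k+1)) * D k
        = ∑ k ∈ J, p k * D k + ∑ k ∈ J, q (k+1) * D k := by
      rw [← Finset.sum_add_distrib]
      apply Finset.sum_congr rfl
      intro k _
      ring
    have e2 : ∑ k ∈ J, p k * D k = ∑ k ∈ I, p k * D k := by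
      symm
      apply Finset.sum_subset (Finset.subset_union_left)
      intro k _ hkn
      rw [hp0 k hkn, zero_mul]
    have e3 : ∑ k ∈ J, q (k+1) * D k = ∑ k ∈ I, q k * D (k-1) := by
      have himg : ∑ k' ∈ J.image (fun k => k + 1), q k' * D (k'-1)
          = ∑ k ∈ J, q (k+1) * D ((k+1)-1) :=
        Finset.sum_image (by intro a _ b _ h; have h' : a + 1 = b + 1 := h; omega)
      have heq : ∀ k : ℤ, q (k+1) * D ((k+1)-1) = q (k+1) * D k := by
        intro k
        congr 2
        ring
      rw [Finset.sum_congr rfl (fun k _ => heq k)] at himg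
      rw [← himg]
      symm
      apply Finset.sum_subset
      · intro k hk
        apply Finset.mem_image.mpr
        refine ⟨k - 1, ?_, by ring⟩
        exact Finset.mem_union_right _ (Finset.mem_image.mpr ⟨k, hk, rfl⟩)
      · intro k _ hkn
        rw [hq0 k hkn, zero_mul]
    rw [e1, e2, e3]
  -- termwise identity on interface points
  have hterm : ∀ k ∈ I, p k * D k + q k * D (k-1)
      = (if x k = b then (1:ℝ) else -1) * (p k - q k) * ((T k : ℤ) : ℝ)
        - (p k + q k) * (if x k = b then (0:ℝ) else 1) := by
    intro k hk
    have hne := (memI k).mp hk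
    have hsd := Sdiff x b N M kx h1 h2 k
    rw [hDflip k, hDflip (k-1)]
    rcases hv k with hxk | hxk
    · have hxk1 : x (k-1) = 1 - b := hvne _ (fun h => hne (h.trans hxk.symm))
      have i1 : (if x (k-1) = b then (1:ℤ) else 0) = 0 :=
        if_neg (by rw [hxk1]; exact hbb)
      have i2 : (if x k = 1 - b then (1:ℤ) else 0) = 0 :=
        if_neg (by rw [hxk]; exact fun hc => hbb hc.symm)
      rw [i1, i2] at hsd
      have hTk : T k = Sfun x k := by
        rw [hTdef]
        simp only []
        rw [if_neg (by rw [hxk]; exact fun hc => hbb hc.symm)]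
        ring
      have hcast : ((Sfun x (k-1) : ℤ) : ℝ) = ((Sfun x k : ℤ) : ℝ) := by
        exact_mod_cast congrArg (fun z : ℤ => (z : ℝ)) (by omega : Sfun x (k-1) = Sfun x k)
      rw [if_pos hxk, if_neg (by rw [hxk1]; exact hbb), if_pos hxk, hTk, hcast]
      ring
    · have hxkb : ¬ (x k = b) := by rw [hxk]; exact hbb
      have hxk1 : x (k-1) = b := (hv (k-1)).resolve_right
        (fun h => hne (h.trans hxk.symm))
      have i1 : (if x (k-1) = b then (1:ℤ) else 0) = 1 := if_pos hxk1
      have i2 : (if x k = 1 - b then (1:ℤ) else 0) = 1 := if_pos hxk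
      rw [i1, i2] at hsd
      have hTk : T k = Sfun x k - 1 := by
        rw [hTdef]
        simp only []
        rw [if_pos hxk]
      have hScast : ((Sfun x (k-1) : ℤ) : ℝ) = ((Sfun x k : ℤ) : ℝ) - 2 := by
        have : Sfun x (k-1) = Sfun x k - 2 := by omega
        rw [this]
        push_cast
        ring
      have hTcast : ((T k : ℤ) : ℝ) = ((Sfun x k : ℤ) : ℝ) - 1 := by
        rw [hTk]
        push_cast
        ring
      rw [if_neg hxkb, if_pos hxk1, if_neg hxkb, hScast, hTcast]
      ring
  -- transform to sums over `range n`
  have hsumI : ∀ f : ℤ → ℝ, ∑ k ∈ I, f k = ∑ r ∈ Finset.range n, f (E r) := by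
    intro f
    have step1 : ∑ k ∈ I, f k = ∑ k : {k // k ∈ I}, f (k : ℤ) :=
      (Finset.sum_coe_sort I (fun k => f k)).symm
    have step2 : ∑ r : Fin n, f ((e r : ℤ)) = ∑ k : {k // k ∈ I}, f (k : ℤ) :=
      Equiv.sum_comp e.toEquiv (fun k : {k // k ∈ I} => f (k : ℤ))
    have step3 : ∑ r : Fin n, f ((e r : ℤ)) = ∑ r : Fin n, f (E r.1) := by
      apply Finset.sum_congr rfl
      intro r _
      congr 1
      rw [hEeq r.1 r.2, Fin.eta]
    rw [step1, ← step2, step3]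
    exact Fin.sum_univ_eq_sum_range (fun r => f (E r)) n
  have hGsum : Gflip p q x
      = (∑ r ∈ Finset.range n,
          (if x (E r) = b then (1:ℝ) else -1) * (p (E r) - q (E r)) * ((T (E r) : ℤ) : ℝ))
        - ∑ r ∈ Finset.range n, (p (E r) + q (E r)) * (if x (E r) = b then (0:ℝ) else 1) := by
    rw [hGf, hsplitJ, ← Finset.sum_add_distrib]
    rw [Finset.sum_congr rfl hterm, Finset.sum_sub_distrib]
    rw [hsumI (fun k => (if x k = b then (1:ℝ) else -1) * (p k - q k) * ((T k : ℤ) : ℝ)),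
        hsumI (fun k => (p k + q k) * (if x k = b then (0:ℝ) else 1))]
  have hfirst : (∑ r ∈ Finset.range n,
      (if x (E r) = b then (1:ℝ) else -1) * (p (E r) - q (E r)) * ((T (E r) : ℤ) : ℝ)) ≤ 0 := by
    have : ∀ r ∈ Finset.range n,
        (if x (E r) = b then (1:ℝ) else -1) * (p (E r) - q (E r)) * ((T (E r) : ℤ) : ℝ)
          = cc r * g r := by
      intro r hr
      rw [Finset.mem_range] at hr
      have hx := halt r hr
      rw [hgdef, hccdef]
      simp only []
      by_cases hc : r % 2 = 0
      · rw [if_pos hc] at hx ⊢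
        rw [if_pos hx]
        ring
      · rw [if_neg hc] at hx ⊢
        rw [if_neg (by rw [hx]; exact hbb)]
        ring
    rw [Finset.sum_congr rfl this]
    exact hV
  have hsecond : ∑ r ∈ Finset.range n, (if r % 2 = 0 then (0:ℝ) else sbar)
      ≤ ∑ r ∈ Finset.range n, (p (E r) + q (E r)) * (if x (E r) = b then (0:ℝ) else 1) := by
    apply Finset.sum_le_sum
    intro r hr
    rw [Finset.mem_range] at hr
    have hx := halt r hr
    by_cases hc : r % 2 = 0
    · rw [if_pos hc] at hx ⊢
      rw [if_pos hx]
      simp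
    · rw [if_neg hc] at hx ⊢
      rw [if_neg (by rw [hx]; exact hbb), mul_one]
      exact hlow (E r) ((memI _).mp (hEmem r hr))
  have hcount : ∑ r ∈ Finset.range n, (if r % 2 = 0 then (0:ℝ) else sbar)
      = sbar * ((n / 2 : ℕ) : ℝ) := by
    have : ∀ r, (if r % 2 = 0 then (0:ℝ) else sbar) = sbar * (if r % 2 = 0 then (0:ℝ) else 1) := by
      intro r
      by_cases hc : r % 2 = 0
      · rw [if_pos hc, if_pos hc, mul_zero]
      · rw [if_neg hc, if_neg hc, mul_one]
    rw [Finset.sum_congr rfl (fun r _ => this r), ← Finset.mul_sum, count_odd]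
  have hfin : Gflip p q x ≤ - sbar * ((n / 2 : ℕ) : ℝ) := by
    rw [hGsum]
    have := hsecond
    rw [hcount] at this
    linarith
  have hncast : (n : ℝ) = 2 * ((n / 2 : ℕ) : ℝ) + 1 := by
    have : n = 2 * (n / 2) + 1 := by omega
    exact_mod_cast congrArg (fun z : ℕ => (z : ℝ)) this
  rw [show ((Iface x N M).card : ℝ) = (n : ℝ) from by rw [← hndef]]
  rw [hncast]
  have h0 : (0:ℝ) ≤ ((n / 2 : ℕ) : ℝ) := Nat.cast_nonneg _
  nlinarith [hfin, hsbar, h0]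

end GflipSec
section GexclSec

attribute [local instance] Classical.propDecidable

theorem Gexcl_bound (x : ℤ → ℤ) (b N M : ℤ) (hNM : N ≤ M)
    (hNa : ∀ k ≤ N, x k = 1 - b) (hMb : ∀ k, M ≤ k → x k = b)
    (hb : b = 0 ∨ b = 1) (hv : ∀ l, x l = b ∨ x l = 1 - b)
    (bp bm : ℤ → ℝ) (dbar : ℝ)
    (hdrift : (charge (itf x) : ℝ) *
        ((∑ᶠ i : ℤ, if itf x i = 1 then bp i else 0)
          - ∑ᶠ i : ℤ, if itf x i = -1 then bm i else 0)
      ≤ dbar * (pnum (itf x) : ℝ)) :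
    Gexcl bp bm x ≤ dbar * ((Iface x N M).card : ℝ) := by
  have hbb : (1:ℤ) - b ≠ b := by omega
  have memI := mem_Iface x b N M hNa hMb
  set I := Iface x N M with hIdef
  have hch : charge (itf x) = 2*b - 1 := by
    have := charge_eq x (1-b) b N M hNM hNa hMb
    rw [this]
    ring
  set f1 : ℤ → ℝ := fun i => if itf x i = 1 then bp i else 0 with hf1
  set f2 : ℤ → ℝ := fun i => if itf x i = -1 then bm i else 0 with hf2
  have hs1 : ∑ᶠ i : ℤ, f1 i = ∑ i ∈ I, f1 i := by
    apply finsum_eq_finset_sum_of_support_subset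
    intro i hi
    simp only [Function.mem_support, hf1] at hi
    have : ¬ (itf x i = 1) → False := fun h => hi (if_neg h)
    have hitf : itf x i = 1 := not_not.mp (fun h => this h)
    have : ¬ (x (i-1) = x i) := by
      intro h
      rw [itf, h] at hitf
      omega
    exact Finset.mem_coe.mpr ((memI i).mpr this)
  have hs2 : ∑ᶠ i : ℤ, f2 i = ∑ i ∈ I, f2 i := by
    apply finsum_eq_finset_sum_of_support_subset
    intro i hi
    simp only [Function.mem_support, hf2] at hi
    have hitf : itf x i = -1 := not_not.mp (fun h => hi (if_neg h))
    have : ¬ (x (i-1) = x i) := by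
      intro h
      rw [itf, h] at hitf
      omega
    exact Finset.mem_coe.mpr ((memI i).mpr this)
  set W : ℤ → ℝ := fun k =>
    (if x k = 0 ∧ x (k+1) = 1 then bp (k+1) else 0)
      + (if x k = 1 ∧ x (k+1) = 0 then bm (k+1) else 0) with hW
  set Dsw : ℤ → ℝ := fun k => (fCD (swapAt x k) : ℝ) - (fCD x : ℝ) with hDsw
  set I' : Finset ℤ := I.image (fun k => k - 1) with hI'
  have hGe : Gexcl bp bm x = ∑ k ∈ I', W k * Dsw k := by
    have : Gexcl bp bm x = ∑ᶠ (k : ℤ), W k * Dsw k := rfl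
    rw [this]
    apply finsum_eq_finset_sum_of_support_subset
    intro k hk
    simp only [Function.mem_support] at hk
    have hWk : ¬ (W k = 0) := fun h => hk (by rw [h, zero_mul])
    have hne : ¬ (x k = x (k+1)) := by
      intro h
      apply hWk
      rw [hW]
      simp only []
      rw [if_neg (by rintro ⟨ha, hb'⟩; rw [h, hb'] at ha; exact absurd ha (by omega)),
        if_neg (by rintro ⟨ha, hb'⟩; rw [h, hb'] at ha; exact absurd ha (by omega))]
      ring
    have hk1I : k + 1 ∈ I := (memI (k+1)).mpr (by
      intro h
      rw [show k+1-1 = k by ring] at h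
      exact hne h)
    exact Finset.mem_coe.mpr (Finset.mem_image.mpr ⟨k+1, hk1I, by ring⟩)
  have hDswval : ∀ k : ℤ, Dsw k
      = (if x (k+1) = b ∧ x k = 1 - b then (1:ℝ) else 0)
        - (if x k = b ∧ x (k+1) = 1 - b then (1:ℝ) else 0) := by
    intro k
    have hf := fCD_swap x b N M hNM hNa hMb k
    rw [hDsw]
    by_cases c1 : x (k+1) = b ∧ x k = 1 - b
    · rw [if_pos c1] at hf ⊢
      by_cases c2 : x k = b ∧ x (k+1) = 1 - b
      · exfalso; rw [c1.2] at c2; exact hbb c2.1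
      · rw [if_neg c2] at hf ⊢
        have : ((fCD (swapAt x k) : ℤ) : ℝ) - ((fCD x : ℤ) : ℝ) = ((1 - 0 : ℤ) : ℝ) := by
          rw [← Int.cast_sub, hf]
        push_cast at this ⊢
        linarith
    · rw [if_neg c1] at hf ⊢
      by_cases c2 : x k = b ∧ x (k+1) = 1 - b
      · rw [if_pos c2] at hf ⊢
        have : ((fCD (swapAt x k) : ℤ) : ℝ) - ((fCD x : ℤ) : ℝ) = ((0 - 1 : ℤ) : ℝ) := by
          rw [← Int.cast_sub, hf]
        push_cast at this ⊢
        linarith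
      · rw [if_neg c2] at hf ⊢
        have : ((fCD (swapAt x k) : ℤ) : ℝ) - ((fCD x : ℤ) : ℝ) = ((0 - 0 : ℤ) : ℝ) := by
          rw [← Int.cast_sub, hf]
        push_cast at this ⊢
        linarith
  have hterm : ∀ k : ℤ, W k * Dsw k = (2*(b:ℝ) - 1) * (f1 (k+1) - f2 (k+1)) := by
    intro k
    rw [hDswval k, hW, hf1, hf2]
    simp only [itf, show k+1-1 = k by ring]
    rcases hb with hb' | hb' <;> subst hb' <;>
      rcases hv k with h1 | h1 <;> rcases hv (k+1) with h2 | h2 <;>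
      norm_num [h1, h2]
  have himgsum : ∀ h : ℤ → ℝ, ∑ k ∈ I', h (k+1) = ∑ i ∈ I, h i := by
    intro h
    rw [hI']
    rw [Finset.sum_image (by intro a _ b _ hab; have h' : a - 1 = b - 1 := hab; omega)]
    apply Finset.sum_congr rfl
    intro i _
    congr 1
    ring
  calc Gexcl bp bm x = ∑ k ∈ I', W k * Dsw k := hGe
    _ = ∑ k ∈ I', (2*(b:ℝ) - 1) * (f1 (k+1) - f2 (k+1)) :=
        Finset.sum_congr rfl (fun k _ => hterm k)
    _ = (2*(b:ℝ) - 1) * ∑ k ∈ I', (f1 (k+1) - f2 (k+1)) := by rw [Finset.mul_sum]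
    _ = (2*(b:ℝ) - 1) * ((∑ k ∈ I', f1 (k+1)) - ∑ k ∈ I', f2 (k+1)) := by
        rw [Finset.sum_sub_distrib]
    _ = (charge (itf x) : ℝ) * ((∑ᶠ i : ℤ, f1 i) - ∑ᶠ i : ℤ, f2 i) := by
        rw [himgsum f1, himgsum f2, ← hs1, ← hs2, hch]
        push_cast
        ring
    _ ≤ dbar * (pnum (itf x) : ℝ) := hdrift
    _ = dbar * ((Iface x N M).card : ℝ) := by
        rw [pnum_eq x b N M hb hNa hMb hv]
        push_cast
        ring
end GexclSec

/-- Lemma 3 of the paper under assumption (A4a): core drift inequality for the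
inversion count. -/
theorem drift_inequality_A4a
    (x : ℤ → ℤ) (hx : IsHeight x)
    (p q bp bm : ℤ → ℝ)
    (hp : ∀ k, 0 ≤ p k) (hq : ∀ k, 0 ≤ q k)
    (hbp : ∀ i, 0 ≤ bp i) (hbm : ∀ i, 0 ≤ bm i)
    (hrate0 : ∀ k, x (k - 1) = x k → p k = 0 ∧ q k = 0)
    (sbar : ℝ) (hsbar : 0 < sbar)
    (hlow : ∀ k, x (k - 1) ≠ x k → sbar ≤ p k + q k)
    (hup : ∀ k, p k + q k ≤ 1)
    (hA4a : ∀ k l : ℤ, k < l → x (k - 1) ≠ x k → x (l - 1) ≠ x l →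
      (∀ m, k ≤ m → m < l → x m = x k) → q k + p l ≤ p k + q l)
    (dbar : ℝ) (hdbar : 0 ≤ dbar)
    (hdrift : (charge (itf x) : ℝ) *
        ((∑ᶠ i : ℤ, if itf x i = 1 then bp i else 0)
          - ∑ᶠ i : ℤ, if itf x i = -1 then bm i else 0)
      ≤ dbar * (pnum (itf x) : ℝ))
    (α₁ α₂ : ℝ) (hα₁ : 0 ≤ α₁) (hα₂ : 0 ≤ α₂) :
    α₁ * Gflip p q x + α₂ * Gexcl bp bm x
      ≤ α₁ * sbar - (α₁ * sbar / 2 - α₂ * dbar) * (pnum (itf x) : ℝ) := by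
  obtain ⟨h01, a, b, hab, ⟨N, hN⟩, ⟨M, hM⟩⟩ := hx
  have hNM : N < M := by
    by_contra h
    push_neg at h
    exact hab ((hN N le_rfl).symm.trans (hM N h))
  have hb01 : b = 0 ∨ b = 1 := by
    have h1 := hM M le_rfl
    have h2 := h01 M
    omega
  have ha01 : a = 0 ∨ a = 1 := by
    have h1 := hN N le_rfl
    have h2 := h01 N
    omega
  have hab' : a = 1 - b := by omega
  have hNa : ∀ k ≤ N, x k = 1 - b := fun k hk => hab' ▸ hN k hk
  have hv : ∀ l, x l = b ∨ x l = 1 - b := by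
    intro l
    have := h01 l
    omega
  have hGf := Gflip_bound x b N M (le_of_lt hNM) hNa hM hb01 hv p q hp hq hrate0
    sbar hsbar hlow hA4a
  have hGe := Gexcl_bound x b N M (le_of_lt hNM) hNa hM hb01 hv bp bm dbar hdrift
  have hpn : ((pnum (itf x) : ℤ) : ℝ) = ((Iface x N M).card : ℝ) := by
    rw [pnum_eq x b N M hb01 hNa hM hv]
    push_cast
    ring
  rw [hpn]
  have t1 : α₁ * Gflip p q x ≤ α₁ * (sbar - sbar * ((Iface x N M).card : ℝ) / 2) :=
    mul_le_mul_of_nonneg_left hGf hα₁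
  have t2 : α₂ * Gexcl bp bm x ≤ α₂ * (dbar * ((Iface x N M).card : ℝ)) :=
    mul_le_mul_of_nonneg_left hGe hα₂
  nlinarith [t1, t2]
end

section
/- Width bounds on the inversion count: For every x ∈ 𝒮_hgt with interface y, one has w(y) − 2 ≤ f_CD(x) ≤ w(y)². -/
open scoped BigOperators

lemma sum_Icc_telescope_s7 (x : ℤ → ℤ) (a b : ℤ) (h : a ≤ b) :
    ∑ i ∈ Finset.Icc a b, (x i - x (i - 1)) = x b - x (a - 1) := by
  have key : ∀ n : ℕ, ∑ i ∈ Finset.Icc a (a + n), (x i - x (i - 1))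
      = x (a + n) - x (a - 1) := by
    intro n
    induction n with
    | zero => simp
    | succ m ih =>
      have e : a + ((m : ℤ) + 1) = (a + m) + 1 := by ring
      have e2 : ((m + 1 : ℕ) : ℤ) = (m : ℤ) + 1 := by push_cast; ring
      rw [e2, e, show Finset.Icc a (a + m + 1) = insert (a + m + 1) (Finset.Icc a (a + m)) by
          ext i; simp only [Finset.mem_insert, Finset.mem_Icc]; omega,
        Finset.sum_insert (by simp [Finset.mem_Icc]), ih]
      have e3 : a + (m : ℤ) + 1 - 1 = a + m := by ring
      rw [e3]; ring
  have hk := key (b - a).toNat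
  rwa [show a + ((b - a).toNat : ℤ) = b by omega] at hk

/-- Width bounds on the inversion count: `w(y) − 2 ≤ f_CD(x) ≤ w(y)²`. -/
theorem fCD_width_bounds
    (x : ℤ → ℤ) (hx : IsHeight x)
    (il ir : ℤ)
    (hil : itf x il ≠ 0 ∧ ∀ i, itf x i ≠ 0 → il ≤ i)
    (hir : itf x ir ≠ 0 ∧ ∀ i, itf x i ≠ 0 → i ≤ ir) :
    (ir - il + 1) - 2 ≤ (fCD x : ℤ) ∧ (fCD x : ℤ) ≤ (ir - il + 1) ^ 2 := by
  obtain ⟨hval, a, b, hab, ⟨N, hN⟩, ⟨M, hM⟩⟩ := hx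
  have hle : il ≤ ir := hil.2 ir hir.1
  -- constancy to the left of il
  have hleft : ∀ k ≤ il - 1, x k = x (il - 1) := by
    intro k hk
    have key : ∀ n : ℕ, x (il - 1 - n) = x (il - 1) := by
      intro n; induction n with
      | zero => simp
      | succ m ih =>
        have h0 : itf x (il - 1 - m) = 0 := by
          by_contra h; have := hil.2 _ h; omega
        have h1 : x (il - 1 - m) - x (il - 1 - m - 1) = 0 := h0
        have h2 : x (il - 1 - ((m : ℤ) + 1)) = x (il - 1 - m) := by
          have e : il - 1 - ((m : ℤ) + 1) = il - 1 - m - 1 := by ring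
          rw [e]; omega
        have e2 : ((m + 1 : ℕ) : ℤ) = (m : ℤ) + 1 := by push_cast; ring
        rw [e2, h2, ih]
    have hk2 := key (il - 1 - k).toNat
    rwa [show (il - 1 - ((il - 1 - k).toNat : ℤ)) = k by omega] at hk2
  -- constancy to the right of ir
  have hright : ∀ k, ir ≤ k → x k = x ir := by
    intro k hk
    have key : ∀ n : ℕ, x (ir + n) = x ir := by
      intro n; induction n with
      | zero => simp
      | succ m ih =>
        have h0 : itf x (ir + m + 1) = 0 := by
          by_contra h; have := hir.2 _ h; omega
        have h1 : x (ir + m + 1) - x (ir + m + 1 - 1) = 0 := h0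
        have h2 : x (ir + ((m : ℤ) + 1)) = x (ir + m) := by
          have e : ir + ((m : ℤ) + 1) = ir + m + 1 := by ring
          have e' : ir + (m : ℤ) + 1 - 1 = ir + m := by ring
          rw [e]; rw [e'] at h1; omega
        have e2 : ((m + 1 : ℕ) : ℤ) = (m : ℤ) + 1 := by push_cast; ring
        rw [e2, h2, ih]
    have hk2 := key (k - ir).toNat
    rwa [show (ir + ((k - ir).toNat : ℤ)) = k by omega] at hk2
  set A := x (il - 1) with hA
  set B := x ir with hB
  have hA01 : A = 0 ∨ A = 1 := hval _
  have hB01 : B = 0 ∨ B = 1 := hval _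
  have hAa : A = a := by
    have h1 := hN (min N (il - 1)) (min_le_left _ _)
    have h2 := hleft (min N (il - 1)) (min_le_right _ _)
    rw [h1] at h2; exact h2.symm
  have hBb : B = b := by
    have h1 := hM (max M ir) (le_max_left _ _)
    have h2 := hright (max M ir) (le_max_right _ _)
    rw [h1] at h2; exact h2.symm
  have hAB : A ≠ B := by rw [hAa, hBb]; exact hab
  have hsumAB : A + B = 1 := by omega
  -- charge
  have hsupp : Function.support (itf x) ⊆ ↑(Finset.Icc il ir) := by
    intro i hi
    simp only [Finset.coe_Icc, Set.mem_Icc]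
    exact ⟨hil.2 i hi, hir.2 i hi⟩
  have hch : charge (itf x) = B - A := by
    rw [charge, finsum_eq_sum_of_support_subset _ hsupp]
    simp only [itf]
    exact sum_Icc_telescope_s7 x il ir hle
  have hkappa : kappa x = B := by rw [kappa, hch]; omega
  have h1k : 1 - kappa x = A := by rw [hkappa]; omega
  -- endpoint values
  have hxil : x il = B := by
    have h1 : x il - x (il - 1) ≠ 0 := hil.1
    have h2 := hval il
    omega
  have hxir1 : x (ir - 1) = A := by
    have h1 : x ir - x (ir - 1) ≠ 0 := hir.1
    have h2 := hval (ir - 1)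
    omega
  have hBk : ∀ k, x k = B → il ≤ k := by
    intro k hk
    by_contra h
    have := hleft k (by omega)
    rw [hk] at this; exact hAB this.symm
  have hAk : ∀ k, x k = A → k ≤ ir - 1 := by
    intro k hk
    by_contra h
    have := hright k (by omega)
    rw [hk] at this; exact hAB this
  -- the set of inversions
  set Pset : Set (ℤ × ℤ) :=
    {p | p.1 < p.2 ∧ x p.1 = kappa x ∧ x p.2 = 1 - kappa x} with hPset
  have hfCD : fCD x = Nat.card ↥Pset := rfl
  set S : Finset (ℤ × ℤ) := Finset.Icc il (ir - 1) ×ˢ Finset.Icc il (ir - 1) with hS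
  have hPS : Pset ⊆ ↑S := by
    rintro ⟨p1, p2⟩ ⟨hlt, h1, h2⟩
    rw [hkappa] at h1
    rw [h1k] at h2
    have b1 := hBk _ h1
    have b2 := hAk _ h2
    simp only [hS, Finset.coe_product, Set.mem_prod, Finset.coe_Icc, Set.mem_Icc]
    exact ⟨⟨b1, by omega⟩, by omega, b2⟩
  have hPfin : Pset.Finite := S.finite_toSet.subset hPS
  -- upper bound
  have hup : (fCD x : ℤ) ≤ (ir - il + 1) ^ 2 := by
    have h1 : fCD x = Pset.ncard := by rw [hfCD, Nat.card_coe_set_eq]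
    have h2 : Pset.ncard ≤ S.card := by
      rw [← Set.ncard_coe_finset]
      exact Set.ncard_le_ncard hPS S.finite_toSet
    have h3 : S.card = (ir - il).toNat * (ir - il).toNat := by
      rw [hS, Finset.card_product, Int.card_Icc]
      congr 1 <;> congr 1 <;> omega
    have h4 : (fCD x : ℤ) ≤ ((ir - il).toNat : ℤ) * ((ir - il).toNat : ℤ) := by
      rw [h1]
      have := h2.trans_eq h3
      exact_mod_cast this
    have h5 : ((ir - il).toNat : ℤ) = ir - il := by omega
    rw [h5] at h4
    nlinarith [hle]
  -- lower bound
  have hlow : ir - il - 1 ≤ (fCD x : ℤ) := by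
    by_cases hcase : il + 2 ≤ ir
    · haveI : Finite {p : ℤ × ℤ // p.1 < p.2 ∧ x p.1 = kappa x ∧ x p.2 = 1 - kappa x} :=
        hPfin.to_subtype
      have hf : ∃ f : {m : ℤ // m ∈ Finset.Icc il (ir - 2)} →
          {p : ℤ × ℤ // p.1 < p.2 ∧ x p.1 = kappa x ∧ x p.2 = 1 - kappa x},
          Function.Injective f := by
        refine ⟨fun m => if h : x m.1 = B then
            ⟨(m.1, ir - 1), ?_, ?_, ?_⟩ else ⟨(il, m.1), ?_, ?_, ?_⟩, ?_⟩
        · have := m.2; rw [Finset.mem_Icc] at this; show m.1 < ir - 1; omega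
        · show x m.1 = kappa x; rw [hkappa]; exact h
        · show x (ir - 1) = 1 - kappa x; rw [h1k]; exact hxir1
        · have hm := m.2; rw [Finset.mem_Icc] at hm
          show il < m.1
          rcases eq_or_lt_of_le hm.1 with he | hlt
          · exfalso; rw [← he, hxil] at h; exact h rfl
          · exact hlt
        · show x il = kappa x; rw [hkappa]; exact hxil
        · show x m.1 = 1 - kappa x
          rw [h1k]
          have := hval m.1
          omega
        · intro m m' hmm
          ext
          by_cases h1 : x m.1 = B <;> by_cases h2 : x m'.1 = B <;>
            simp only [h1, h2, dif_pos, dif_neg, not_false_iff, Subtype.mk.injEq,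
              Prod.mk.injEq] at hmm
          · exact hmm.1
          · exfalso
            have := m'.2; rw [Finset.mem_Icc] at this
            omega
          · exfalso
            have := m.2; rw [Finset.mem_Icc] at this
            omega
          · exact hmm.2
      obtain ⟨f, hfinj⟩ := hf
      have hcard := Nat.card_le_card_of_injective f hfinj
      rw [Nat.card_eq_finsetCard] at hcard
      rw [Int.card_Icc] at hcard
      have : ((ir - 2 + 1 - il).toNat : ℤ) ≤ (fCD x : ℤ) := by
        rw [hfCD]; exact_mod_cast hcard
      omega
    · have : (0 : ℤ) ≤ (fCD x : ℤ) := Int.natCast_nonneg _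
      omega
  exact ⟨by omega, hup⟩
end

section
/- Rough bound on the spin-flip contribution: Let x ∈ 𝒮_hgt with interface y and suppose p_k(x) + q_k(x) ≤ 1 for every half-integer k. Then |(G^flip f_CD)(x)| ≤ Σ_k (p_k(x) + q_{k+1}(x))·|S(k)| ≤ 2·w(y)². -/
open scoped BigOperators

lemma icc_insert_int (a b : ℤ) (h : a ≤ b + 1) :
    Finset.Icc a (b + 1) = insert (b + 1) (Finset.Icc a b) := by
  ext i
  simp only [Finset.mem_Icc, Finset.mem_insert]
  omega

lemma tele_sum (z : ℤ → ℤ) (m : ℤ) :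
    ∀ M, m ≤ M → ∑ i ∈ Finset.Icc m M, (z i - z (i - 1)) = z M - z (m - 1) := by
  refine Int.le_induction ?_ ?_
  · simp
  · intro n hn ih
    rw [icc_insert_int m n (by omega), Finset.sum_insert (by simp)]
    rw [ih]
    have h1 : n + 1 - 1 = n := by ring
    rw [h1]; ring

lemma charge_eq_ends (z : ℤ → ℤ) (m M : ℤ) (hmM : m ≤ M)
    (h : ∀ i, itf z i ≠ 0 → m ≤ i ∧ i ≤ M) :
    charge (itf z) = z M - z (m - 1) := by
  have h1 : charge (itf z) = ∑ i ∈ Finset.Icc m M, itf z i := by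
    apply finsum_eq_sum_of_support_subset
    intro i hi
    simp only [Function.mem_support] at hi
    simpa [Finset.mem_Icc] using h i hi
  rw [h1]
  exact tele_sum z m M hmM

lemma support_itf (x : ℤ → ℤ) (il ir : ℤ)
    (hleft : ∀ l, l ≤ il - 1 → x l = x (il - 1))
    (hright : ∀ l, ir ≤ l → x l = x ir) :
    ∀ i, itf x i ≠ 0 → il ≤ i ∧ i ≤ ir := by
  intro i hi
  by_contra hcon
  push_neg at hcon
  apply hi
  simp only [itf]
  rcases lt_or_ge i il with h | h
  · rw [hleft i (by omega), hleft (i - 1) (by omega)]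
    ring
  · have h2 := hcon h
    rw [hright i (by omega), hright (i - 1) (by omega)]
    ring

lemma flipAt_ne (x : ℤ → ℤ) (k j : ℤ) (h : j ≠ k) : flipAt x k j = x j :=
  Function.update_of_ne h _ _

lemma flipAt_self (x : ℤ → ℤ) (k : ℤ) : flipAt x k k = 1 - x k :=
  Function.update_self _ _ _

lemma charge_ends' (x : ℤ → ℤ) (il ir : ℤ) (hlr : il ≤ ir)
    (hleft : ∀ l, l ≤ il - 1 → x l = x (il - 1))
    (hright : ∀ l, ir ≤ l → x l = x ir) :
    charge (itf x) = x ir - x (il - 1) :=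
  charge_eq_ends x il ir hlr (support_itf x il ir hleft hright)

lemma kappa_flip (x : ℤ → ℤ) (il ir : ℤ) (hlr : il ≤ ir)
    (hleft : ∀ l, l ≤ il - 1 → x l = x (il - 1))
    (hright : ∀ l, ir ≤ l → x l = x ir) (k : ℤ) :
    kappa (flipAt x k) = kappa x := by
  set m := min il k with hm
  set M := max ir (k + 1) with hM
  have hch : charge (itf (flipAt x k)) = flipAt x k M - flipAt x k (m - 1) := by
    apply charge_eq_ends _ m M (by omega)
    intro i hi
    by_cases h1 : i = k
    · omega
    by_cases h2 : i = k + 1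
    · omega
    have : itf (flipAt x k) i = itf x i := by
      simp only [itf, flipAt_ne x k i h1, flipAt_ne x k (i - 1) (by omega)]
    rw [this] at hi
    have := support_itf x il ir hleft hright i hi
    omega
  have hM' : flipAt x k M = x ir := by
    rw [flipAt_ne x k M (by omega), hright M (by omega)]
  have hm' : flipAt x k (m - 1) = x (il - 1) := by
    rw [flipAt_ne x k (m - 1) (by omega), hleft (m - 1) (by omega)]
  have hchx : charge (itf x) = x ir - x (il - 1) :=
    charge_ends' x il ir hlr hleft hright
  simp only [kappa, hch, hM', hm', hchx]

lemma kappa_ends (x : ℤ → ℤ) (hvals : ∀ l, x l = 0 ∨ x l = 1)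
    (il ir : ℤ) (hlr : il ≤ ir)
    (hleft : ∀ l, l ≤ il - 1 → x l = x (il - 1))
    (hright : ∀ l, ir ≤ l → x l = x ir)
    (hne : x (il - 1) ≠ x ir) :
    kappa x = x ir ∧ 1 - kappa x = x (il - 1) := by
  have hchx : charge (itf x) = x ir - x (il - 1) :=
    charge_ends' x il ir hlr hleft hright
  rcases hvals ir with h1 | h1 <;> rcases hvals (il - 1) with h2 | h2 <;>
    rw [h1, h2] at hne ⊢ <;> simp only [kappa, hchx, h1, h2] <;> omega

lemma flip_diff_core (x : ℤ → ℤ) (il ir : ℤ)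
    (hleft : ∀ l, l ≤ il - 1 → x l = x (il - 1))
    (hright : ∀ l, ir ≤ l → x l = x ir)
    (hκr : kappa x = x ir) (hκl : 1 - kappa x = x (il - 1))
    (hκne : kappa x ≠ 1 - kappa x)
    (k : ℤ) (hxk : x k = kappa x)
    (hκflip : kappa (flipAt x k) = kappa x) :
    (fCD (flipAt x k) : ℤ) - (fCD x : ℤ) = Sfun x k := by
  classical
  have hmemκ : ∀ l, x l = kappa x → il ≤ l := by
    intro l hl
    by_contra hc
    push_neg at hc
    have h1 := hleft l (by omega)
    exact hκne ((hl.symm.trans h1).trans hκl.symm)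
  have hmem1κ : ∀ l, x l = 1 - kappa x → l ≤ ir - 1 := by
    intro l hl
    by_contra hc
    push_neg at hc
    have h1 := hright l (by omega)
    exact hκne ((hl.symm.trans h1).trans hκr.symm).symm
  have hxk1 : x k ≠ 1 - kappa x := by rw [hxk]; exact hκne
  set A : Set ℤ := {l | l < k ∧ x l = kappa x} with hAdef
  set B : Set ℤ := {l | k < l ∧ x l = 1 - kappa x} with hBdef
  have hAfin : A.Finite := by
    apply Set.Finite.subset (Set.finite_Icc il k)
    rintro l ⟨h1, h2⟩
    exact Set.mem_Icc.2 ⟨hmemκ l h2, le_of_lt h1⟩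
  have hBfin : B.Finite := by
    apply Set.Finite.subset (Set.finite_Icc k ir)
    rintro l ⟨h1, h2⟩
    have := hmem1κ l h2
    exact Set.mem_Icc.2 ⟨le_of_lt h1, by omega⟩
  have hSfun : Sfun x k = (A.ncard : ℤ) - (B.ncard : ℤ) := by
    have e1 : Nat.card {l : ℤ // l < k ∧ x l = kappa x} = A.ncard :=
      Nat.card_coe_set_eq A
    have e2 : Nat.card {l : ℤ // k < l ∧ x l = 1 - kappa x} = B.ncard :=
      Nat.card_coe_set_eq B
    simp only [Sfun, e1, e2]
  set P : Set (ℤ × ℤ) :=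
    {pr | pr.1 < pr.2 ∧ x pr.1 = kappa x ∧ x pr.2 = 1 - kappa x} with hPdef
  set Q : Set (ℤ × ℤ) :=
    {pr | pr.1 < pr.2 ∧ flipAt x k pr.1 = kappa x ∧ flipAt x k pr.2 = 1 - kappa x} with hQdef
  have hfCDx : fCD x = P.ncard := Nat.card_coe_set_eq P
  have hfCDflip : fCD (flipAt x k) = Q.ncard := by
    have h1 : fCD (flipAt x k) = Nat.card
        {pr : ℤ × ℤ // pr.1 < pr.2 ∧ flipAt x k pr.1 = kappa x ∧
          flipAt x k pr.2 = 1 - kappa x} := by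
      unfold fCD
      exact Nat.card_congr (Equiv.subtypeEquivRight (fun pr => by rw [hκflip]))
    rw [h1]
    exact Nat.card_coe_set_eq Q
  have hPfin : P.Finite := by
    apply Set.Finite.subset ((Set.finite_Icc il ir).prod (Set.finite_Icc il ir))
    rintro ⟨a, b⟩ ⟨h1, h2, h3⟩
    have ha := hmemκ a h2
    have hb := hmem1κ b h3
    exact ⟨Set.mem_Icc.2 ⟨ha, by omega⟩, Set.mem_Icc.2 ⟨by omega, by omega⟩⟩
  have hQfin : Q.Finite := by
    apply Set.Finite.subset
      ((Set.finite_Icc (min il k) (max ir k)).prod (Set.finite_Icc (min il k) (max ir k)))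
    rintro ⟨a, b⟩ ⟨h1, h2, h3⟩
    have hb' : b ≤ max ir k := by
      by_cases hbk : b = k
      · omega
      · have := hmem1κ b (by rw [← flipAt_ne x k b hbk]; exact h3)
        omega
    have ha' : min il k ≤ a := by
      by_cases hak : a = k
      · omega
      · have := hmemκ a (by rw [← flipAt_ne x k a hak]; exact h2)
        omega
    exact ⟨Set.mem_Icc.2 ⟨ha', by omega⟩, Set.mem_Icc.2 ⟨by omega, hb'⟩⟩
  set Pno : Set (ℤ × ℤ) :=
    {pr | (pr.1 < pr.2 ∧ x pr.1 = kappa x ∧ x pr.2 = 1 - kappa x) ∧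
      pr.1 ≠ k ∧ pr.2 ≠ k} with hPnodef
  have hPdecomp : P = Pno ∪ (fun b => ((k : ℤ), b)) '' B := by
    ext ⟨a, b⟩
    simp only [hPdef, hPnodef, hBdef, Set.mem_union, Set.mem_setOf_eq, Set.mem_image]
    constructor
    · rintro ⟨h1, h2, h3⟩
      by_cases hak : a = k
      · right
        exact ⟨b, ⟨by omega, h3⟩, by rw [hak]⟩
      · by_cases hbk : b = k
        · exact absurd (hbk ▸ h3) hxk1
        · left; exact ⟨⟨h1, h2, h3⟩, hak, hbk⟩
    · rintro (⟨⟨h1, h2, h3⟩, _, _⟩ | ⟨b', ⟨hb1, hb2⟩, heq⟩)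
      · exact ⟨h1, h2, h3⟩
      · injection heq with e1 e2
        subst e1; subst e2
        exact ⟨hb1, hxk, hb2⟩
  have hQdecomp : Q = Pno ∪ (fun a => (a, (k : ℤ))) '' A := by
    ext ⟨a, b⟩
    simp only [hQdef, hPnodef, hAdef, Set.mem_union, Set.mem_setOf_eq, Set.mem_image]
    constructor
    · rintro ⟨h1, h2, h3⟩
      by_cases hak : a = k
      · subst hak
        rw [flipAt_self, hxk] at h2
        exact absurd h2.symm hκne
      · by_cases hbk : b = k
        · right
          refine ⟨a, ⟨by omega, ?_⟩, by rw [hbk]⟩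
          rw [← flipAt_ne x k a hak]; exact h2
        · left
          rw [flipAt_ne x k a hak] at h2
          rw [flipAt_ne x k b hbk] at h3
          exact ⟨⟨h1, h2, h3⟩, hak, hbk⟩
    · rintro (⟨⟨h1, h2, h3⟩, h4, h5⟩ | ⟨a', ⟨ha1, ha2⟩, heq⟩)
      · refine ⟨h1, ?_, ?_⟩
        · rw [flipAt_ne x k a h4]; exact h2
        · rw [flipAt_ne x k b h5]; exact h3
      · injection heq with e1 e2
        refine ⟨by omega, ?_, ?_⟩
        · rw [← e1, flipAt_ne x k a' (by omega)]; exact ha2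
        · rw [← e2, flipAt_self, hxk]
  have hdisj1 : Disjoint Pno ((fun b => ((k : ℤ), b)) '' B) := by
    rw [Set.disjoint_left]
    rintro ⟨a, b⟩ hmem ⟨b', _, heq⟩
    injection heq with e1 e2
    exact hmem.2.1 e1.symm
  have hdisj2 : Disjoint Pno ((fun a => (a, (k : ℤ))) '' A) := by
    rw [Set.disjoint_left]
    rintro ⟨a, b⟩ hmem ⟨a', _, heq⟩
    injection heq with e1 e2
    exact hmem.2.2 e2.symm
  have hPnofin : Pno.Finite := by
    apply hPfin.subset
    rw [hPdecomp]
    exact Set.subset_union_left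
  have hinjB : Function.Injective (fun b : ℤ => ((k : ℤ), b)) := by
    intro u v h
    simpa using h
  have hinjA : Function.Injective (fun a : ℤ => (a, (k : ℤ))) := by
    intro u v h
    simpa using h
  have hcard1 : P.ncard = Pno.ncard + B.ncard := by
    rw [hPdecomp, Set.ncard_union_eq hdisj1 hPnofin (hBfin.image _),
      Set.ncard_image_of_injective _ hinjB]
  have hcard2 : Q.ncard = Pno.ncard + A.ncard := by
    rw [hQdecomp, Set.ncard_union_eq hdisj2 hPnofin (hAfin.image _),
      Set.ncard_image_of_injective _ hinjA]
  rw [hSfun, hfCDx, hfCDflip, hcard1, hcard2]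
  push_cast
  ring

lemma flip_diff_abs (x : ℤ → ℤ) (hvals : ∀ l, x l = 0 ∨ x l = 1)
    (il ir : ℤ) (hlr : il ≤ ir)
    (hleft : ∀ l, l ≤ il - 1 → x l = x (il - 1))
    (hright : ∀ l, ir ≤ l → x l = x ir)
    (hne : x (il - 1) ≠ x ir) (k : ℤ) :
    |(fCD (flipAt x k) : ℤ) - (fCD x : ℤ)| = |Sfun x k| := by
  obtain ⟨hκr, hκl⟩ := kappa_ends x hvals il ir hlr hleft hright hne
  have hκne : kappa x ≠ 1 - kappa x := by
    rw [hκl, hκr]; exact fun h => hne h.symm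
  have hκflip := kappa_flip x il ir hlr hleft hright k
  by_cases hxk : x k = kappa x
  · rw [flip_diff_core x il ir hleft hright hκr hκl hκne k hxk hκflip]
  · have hx'ne : ∀ j, j ≠ k → flipAt x k j = x j := fun j h => flipAt_ne x k j h
    have hx'k : flipAt x k k = 1 - x k := flipAt_self x k
    have hxx : flipAt (flipAt x k) k = x := by
      funext j
      by_cases hj : j = k
      · subst hj
        rw [flipAt_self, hx'k]; ring
      · rw [flipAt_ne _ k j hj, hx'ne j hj]
    set x' := flipAt x k with hx'def
    set il' := min il k with hil'
    set ir' := max ir (k + 1) with hir'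
    have hlr' : il' ≤ ir' := by omega
    have hleft' : ∀ l, l ≤ il' - 1 → x' l = x' (il' - 1) := by
      intro l hl
      rw [hx'ne l (by omega), hx'ne (il' - 1) (by omega),
        hleft l (by omega), hleft (il' - 1) (by omega)]
    have hright' : ∀ l, ir' ≤ l → x' l = x' ir' := by
      intro l hl
      rw [hx'ne l (by omega), hx'ne ir' (by omega),
        hright l (by omega), hright ir' (by omega)]
    have hκr' : kappa x' = x' ir' := by
      rw [hκflip, hκr, hx'ne ir' (by omega), hright ir' (by omega)]
    have hκl' : 1 - kappa x' = x' (il' - 1) := by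
      rw [hκflip, hκl, hx'ne (il' - 1) (by omega), hleft (il' - 1) (by omega)]
    have hκne' : kappa x' ≠ 1 - kappa x' := by rw [hκflip]; exact hκne
    have hκval : kappa x = 0 ∨ kappa x = 1 := by rw [hκr]; exact hvals ir
    have hxk' : x' k = kappa x' := by
      rcases hvals k with h | h <;> rcases hκval with h2 | h2
      · exact absurd (h.trans h2.symm) hxk
      · rw [hκflip, hx'k, h, h2]; norm_num
      · rw [hκflip, hx'k, h, h2]; norm_num
      · exact absurd (h.trans h2.symm) hxk
    have hκflip' : kappa (flipAt x' k) = kappa x' := by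
      rw [hxx, hκflip]
    have hcore := flip_diff_core x' il' ir' hleft' hright' hκr' hκl' hκne' k hxk' hκflip'
    rw [hxx] at hcore
    have hSS : Sfun x' k = Sfun x k := by
      have e1 : Nat.card {l : ℤ // l < k ∧ x' l = kappa x'}
          = Nat.card {l : ℤ // l < k ∧ x l = kappa x} := by
        apply Nat.card_congr
        apply Equiv.subtypeEquivRight
        intro l
        constructor
        · rintro ⟨h1, h2⟩
          exact ⟨h1, by rwa [hx'ne l (by omega), hκflip] at h2⟩
        · rintro ⟨h1, h2⟩
          exact ⟨h1, by rw [hx'ne l (by omega), hκflip]; exact h2⟩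
      have e2 : Nat.card {l : ℤ // k < l ∧ x' l = 1 - kappa x'}
          = Nat.card {l : ℤ // k < l ∧ x l = 1 - kappa x} := by
        apply Nat.card_congr
        apply Equiv.subtypeEquivRight
        intro l
        constructor
        · rintro ⟨h1, h2⟩
          exact ⟨h1, by rwa [hx'ne l (by omega), hκflip] at h2⟩
        · rintro ⟨h1, h2⟩
          exact ⟨h1, by rw [hx'ne l (by omega), hκflip]; exact h2⟩
      simp only [Sfun, e1, e2]
    rw [hSS] at hcore
    calc |(fCD x' : ℤ) - (fCD x : ℤ)| = |(fCD x : ℤ) - (fCD x' : ℤ)| := abs_sub_comm _ _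
      _ = |Sfun x k| := by rw [hcore]

/-- Rough bound on the spin-flip contribution:
`|(G^flip f_CD)(x)| ≤ Σ_k (p_k + q_{k+1})·|S(k)| ≤ 2·w(y)²`. -/
theorem rough_spin_flip_bound
    (x : ℤ → ℤ) (hx : IsHeight x)
    (p q : ℤ → ℝ)
    (hp : ∀ k, 0 ≤ p k) (hq : ∀ k, 0 ≤ q k)
    (hrate0 : ∀ k, x (k - 1) = x k → p k = 0 ∧ q k = 0)
    (hup : ∀ k, p k + q k ≤ 1)
    (il ir : ℤ)
    (hil : itf x il ≠ 0 ∧ ∀ i, itf x i ≠ 0 → il ≤ i)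
    (hir : itf x ir ≠ 0 ∧ ∀ i, itf x i ≠ 0 → i ≤ ir) :
    |Gflip p q x| ≤ ∑ᶠ k : ℤ, (p k + q (k + 1)) * |(Sfun x k : ℝ)| ∧
    (∑ᶠ k : ℤ, (p k + q (k + 1)) * |(Sfun x k : ℝ)|)
      ≤ 2 * ((ir - il + 1 : ℤ) : ℝ) ^ 2 := by
  obtain ⟨hvals, a, b, hab, ⟨N, hN⟩, ⟨M, hM⟩⟩ := hx
  have hlr : il ≤ ir := hil.2 ir hir.1
  have hleftN : ∀ n : ℕ, x (il - 1 - n) = x (il - 1) := by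
    intro n
    induction n with
    | zero => simp
    | succ m ih =>
        have h0 : itf x (il - 1 - m) = 0 := by
          by_contra hc
          have := hil.2 _ hc
          omega
        simp only [itf] at h0
        have h2 : il - 1 - ((m + 1 : ℕ) : ℤ) = il - 1 - (m : ℤ) - 1 := by
          push_cast; ring
        rw [h2]
        omega
  have hleft : ∀ l, l ≤ il - 1 → x l = x (il - 1) := by
    intro l hl
    have h2 : il - 1 - ((il - 1 - l).toNat : ℤ) = l := by omega
    rw [← h2]
    exact hleftN _
  have hrightN : ∀ n : ℕ, x (ir + n) = x ir := by
    intro n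
    induction n with
    | zero => simp
    | succ m ih =>
        have h0 : itf x (ir + m + 1) = 0 := by
          by_contra hc
          have := hir.2 _ hc
          omega
        simp only [itf] at h0
        have h3 : ir + (m : ℤ) + 1 - 1 = ir + (m : ℤ) := by ring
        rw [h3] at h0
        have h2 : ir + ((m + 1 : ℕ) : ℤ) = ir + (m : ℤ) + 1 := by
          push_cast; ring
        rw [h2]
        omega
  have hright : ∀ l, ir ≤ l → x l = x ir := by
    intro l hl
    have h2 : ir + ((l - ir).toNat : ℤ) = l := by omega
    rw [← h2]
    exact hrightN _
  have hne : x (il - 1) ≠ x ir := by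
    have e1 : x (il - 1) = a :=
      (hleft (min N (il - 1)) (min_le_right _ _)).symm.trans (hN _ (min_le_left _ _))
    have e2 : x ir = b :=
      (hright (max M ir) (le_max_right _ _)).symm.trans (hM _ (le_max_left _ _))
    rw [e1, e2]; exact hab
  have habs : ∀ k : ℤ, |(fCD (flipAt x k) : ℝ) - (fCD x : ℝ)| = |(Sfun x k : ℝ)| := by
    intro k
    have h := flip_diff_abs x hvals il ir hlr hleft hright hne k
    exact_mod_cast congrArg (fun z : ℤ => (z : ℝ)) h
  set F := Finset.Icc (il - 1) ir with hF
  have hcoef0 : ∀ k : ℤ, k ∉ F → p k + q (k + 1) = 0 := by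
    intro k hk
    simp only [hF, Finset.mem_Icc, not_and, not_le] at hk
    rcases lt_or_ge k (il - 1) with h | h
    · have e1 : x (k - 1) = x k := by
        rw [hleft (k - 1) (by omega), hleft k (by omega)]
      have e2 : x (k + 1 - 1) = x (k + 1) := by
        rw [hleft (k + 1 - 1) (by omega), hleft (k + 1) (by omega)]
      rw [(hrate0 k e1).1, (hrate0 (k + 1) e2).2]; ring
    · have h3 : ir < k := hk h
      have e1 : x (k - 1) = x k := by
        rw [hright (k - 1) (by omega), hright k (by omega)]
      have e2 : x (k + 1 - 1) = x (k + 1) := by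
        rw [hright (k + 1 - 1) (by omega), hright (k + 1) (by omega)]
      rw [(hrate0 k e1).1, (hrate0 (k + 1) e2).2]; ring
  have hGflip : Gflip p q x
      = ∑ k ∈ F, (p k + q (k + 1)) * ((fCD (flipAt x k) : ℝ) - (fCD x : ℝ)) := by
    simp only [Gflip]
    apply finsum_eq_sum_of_support_subset
    intro k hk
    simp only [Function.mem_support] at hk
    by_contra hc
    exact hk (by rw [hcoef0 k (by simpa using hc), zero_mul])
  have hRHS : (∑ᶠ k : ℤ, (p k + q (k + 1)) * |(Sfun x k : ℝ)|)
      = ∑ k ∈ F, (p k + q (k + 1)) * |(Sfun x k : ℝ)| := by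
    apply finsum_eq_sum_of_support_subset
    intro k hk
    simp only [Function.mem_support] at hk
    by_contra hc
    exact hk (by rw [hcoef0 k (by simpa using hc), zero_mul])
  constructor
  · rw [hGflip, hRHS]
    refine le_trans (Finset.abs_sum_le_sum_abs _ _) ?_
    apply Finset.sum_le_sum
    intro k _
    rw [abs_mul, abs_of_nonneg (add_nonneg (hp k) (hq (k + 1))), habs k]
  · rw [hRHS]
    obtain ⟨hκr, hκl⟩ := kappa_ends x hvals il ir hlr hleft hright hne
    have hκne : kappa x ≠ 1 - kappa x := by
      rw [hκl, hκr]; exact fun h => hne h.symm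
    have hterm : ∀ k ∈ F, (p k + q (k + 1)) * |(Sfun x k : ℝ)|
        ≤ 2 * ((ir - il : ℤ) : ℝ) := by
      intro k hk
      simp only [hF, Finset.mem_Icc] at hk
      have hc2 : p k + q (k + 1) ≤ 2 := by
        have h1 : p k ≤ 1 := le_trans (le_add_of_nonneg_right (hq k)) (hup k)
        have h2 : q (k + 1) ≤ 1 :=
          le_trans (le_add_of_nonneg_left (hp (k + 1))) (hup (k + 1))
        linarith
      have hcA : Nat.card {l : ℤ // l < k ∧ x l = kappa x} ≤ (ir - il).toNat := by
        have hsub : {l : ℤ | l < k ∧ x l = kappa x} ⊆ ↑(Finset.Ico il k) := by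
          rintro l ⟨h1, h2⟩
          simp only [Finset.coe_Ico, Set.mem_Ico]
          refine ⟨?_, h1⟩
          by_contra hc
          push_neg at hc
          exact hκne ((h2.symm.trans (hleft l (by omega))).trans hκl.symm)
        calc Nat.card {l : ℤ // l < k ∧ x l = kappa x}
            = ({l : ℤ | l < k ∧ x l = kappa x}).ncard := Nat.card_coe_set_eq _
          _ ≤ (↑(Finset.Ico il k) : Set ℤ).ncard :=
              Set.ncard_le_ncard hsub (Finset.finite_toSet _)
          _ = (Finset.Ico il k).card := Set.ncard_coe_finset _
          _ = (k - il).toNat := Int.card_Ico il k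
          _ ≤ (ir - il).toNat := by omega
      have hcB : Nat.card {l : ℤ // k < l ∧ x l = 1 - kappa x} ≤ (ir - il).toNat := by
        have hsub : {l : ℤ | k < l ∧ x l = 1 - kappa x} ⊆ ↑(Finset.Ioc k (ir - 1)) := by
          rintro l ⟨h1, h2⟩
          simp only [Finset.coe_Ioc, Set.mem_Ioc]
          refine ⟨h1, ?_⟩
          by_contra hc
          push_neg at hc
          exact hκne ((h2.symm.trans (hright l (by omega))).trans hκr.symm).symm
        calc Nat.card {l : ℤ // k < l ∧ x l = 1 - kappa x}
            = ({l : ℤ | k < l ∧ x l = 1 - kappa x}).ncard := Nat.card_coe_set_eq _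
          _ ≤ (↑(Finset.Ioc k (ir - 1)) : Set ℤ).ncard :=
              Set.ncard_le_ncard hsub (Finset.finite_toSet _)
          _ = (Finset.Ioc k (ir - 1)).card := Set.ncard_coe_finset _
          _ = (ir - 1 - k).toNat := Int.card_Ioc k (ir - 1)
          _ ≤ (ir - il).toNat := by omega
      have hSb : |Sfun x k| ≤ ir - il := by
        rw [abs_le]
        simp only [Sfun]
        constructor <;> omega
      have hSbR : |(Sfun x k : ℝ)| ≤ ((ir - il : ℤ) : ℝ) := by
        rw [← Int.cast_abs]
        exact_mod_cast hSb
      have hwnn : (0 : ℝ) ≤ ((ir - il : ℤ) : ℝ) := by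
        exact_mod_cast (by omega : (0 : ℤ) ≤ ir - il)
      exact mul_le_mul hc2 hSbR (abs_nonneg _) (by norm_num)
    calc ∑ k ∈ F, (p k + q (k + 1)) * |(Sfun x k : ℝ)|
        ≤ ∑ _k ∈ F, 2 * ((ir - il : ℤ) : ℝ) := Finset.sum_le_sum hterm
      _ = (F.card : ℝ) * (2 * ((ir - il : ℤ) : ℝ)) := by
          rw [Finset.sum_const, nsmul_eq_mul]
      _ ≤ 2 * ((ir - il + 1 : ℤ) : ℝ) ^ 2 := by
          have hcard : (F.card : ℝ) = ((ir : ℝ) - il + 2) := by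
            rw [hF, Int.card_Icc]
            rw [show (ir + 1 - (il - 1)) = (ir - il + 2) by ring]
            rw [show ((ir - il + 2).toNat : ℝ) = (((ir - il + 2).toNat : ℤ) : ℝ) by push_cast; ring]
            rw [Int.toNat_of_nonneg (by omega)]
            push_cast; ring
          rw [hcard]
          push_cast
          nlinarith [sq_nonneg ((ir : ℝ) - il + 1)]
end

section
/- Rough bound on the full generator contribution: Let x ∈ 𝒮_hgt with interface y, let n = |y|, and suppose p_k(x) + q_k(x) ≤ 1 for every half-integer k and b⊕_i(y) + b⊖_i(y) ≤ B_n for every i ∈ ℤ, where B_n ≥ 0. Then for all α₁, α₂ ≥ 0: |α₁·(G^flip f_CD)(x) + α₂·(G^excl f_CD)(x)| ≤ 2·α₁·w(y)² + α₂·B_n·n. -/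
open scoped BigOperators

private lemma tele (z : ℤ → ℤ) (m : ℤ) : ∀ n, m - 1 ≤ n →
    ∑ i ∈ Finset.Icc m n, (z i - z (i-1)) = z n - z (m-1) := by
  refine Int.le_induction ?_ ?_
  · have : Finset.Icc m (m-1) = ∅ := by apply Finset.Icc_eq_empty; omega
    simp [this]
  · intro n hn ih
    have hins : Finset.Icc m (n+1) = insert (n+1) (Finset.Icc m n) := by
      ext i; simp only [Finset.mem_Icc, Finset.mem_insert]; omega
    rw [hins, Finset.sum_insert (by simp [Finset.mem_Icc]), ih]
    have h1 : n + 1 - 1 = n := by ring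
    rw [h1]; ring

private lemma const_right (z : ℤ → ℤ) (m n : ℤ) (h : m ≤ n)
    (h0 : ∀ i, m < i → i ≤ n → z i = z (i-1)) : z n = z m := by
  have := tele z (m+1) n (by omega)
  have hz : ∀ i ∈ Finset.Icc (m+1) n, z i - z (i-1) = 0 := by
    intro i hi; simp only [Finset.mem_Icc] at hi
    have := h0 i (by omega) hi.2; omega
  rw [Finset.sum_congr rfl hz] at this
  simp at this
  omega

private lemma charge_eq_s9 (z : ℤ → ℤ) (m M : ℤ) (hmM : m - 1 ≤ M)
    (hs : ∀ i, itf z i ≠ 0 → m ≤ i ∧ i ≤ M) :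
    charge (itf z) = z M - z (m-1) := by
  rw [charge, finsum_eq_sum_of_support_subset _ (s := Finset.Icc m M) ?_]
  · exact tele z m M hmM
  · intro i hi
    simp only [Finset.coe_Icc, Set.mem_Icc]
    exact hs i hi

private lemma fCD_card (z : ℤ → ℤ) (c : ℤ) (hkc : kappa z = c) (T : Finset ℤ)
    (hT : ∀ p : ℤ × ℤ, p.1 < p.2 → z p.1 = c → z p.2 = 1 - c → p ∈ T ×ˢ T) :
    fCD z = ((T ×ˢ T).filter (fun p : ℤ × ℤ => p.1 < p.2 ∧ z p.1 = c ∧ z p.2 = 1 - c)).card := by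
  subst hkc
  have hset : {p : ℤ × ℤ | p.1 < p.2 ∧ z p.1 = kappa z ∧ z p.2 = 1 - kappa z}
      = ↑((T ×ˢ T).filter (fun p : ℤ × ℤ => p.1 < p.2 ∧ z p.1 = kappa z ∧ z p.2 = 1 - kappa z)) := by
    ext p
    simp only [Set.mem_setOf_eq, Finset.coe_filter, Set.mem_setOf_eq]
    constructor
    · rintro ⟨h1, h2, h3⟩
      exact ⟨hT p h1 h2 h3, h1, h2, h3⟩
    · tauto
  have h1 : fCD z = Set.ncard {p : ℤ × ℤ | p.1 < p.2 ∧ z p.1 = kappa z ∧ z p.2 = 1 - kappa z} :=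
    Nat.card_coe_set_eq _
  rw [h1, hset, Set.ncard_coe_finset]

private lemma card_sdiff_le_flip (c k L H lo hi : ℤ) (hc : c ≠ 1 - c)
    (u v : ℤ → ℤ) (huv : ∀ j, j ≠ k → u j = v j)
    (hkL : L - 1 ≤ k) (hkH : k ≤ H + 1)
    (h1 : ∀ j, j ≠ k → u j = c → L ≤ j)
    (h2 : ∀ j, j ≠ k → u j = 1 - c → j ≤ H) :
    ((((Finset.Icc lo hi) ×ˢ (Finset.Icc lo hi)).filter
        (fun p : ℤ × ℤ => p.1 < p.2 ∧ u p.1 = c ∧ u p.2 = 1-c)) \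
     (((Finset.Icc lo hi) ×ˢ (Finset.Icc lo hi)).filter
        (fun p : ℤ × ℤ => p.1 < p.2 ∧ v p.1 = c ∧ v p.2 = 1-c))).card
      ≤ (Finset.Icc L H).card := by
  have key : ∀ p : ℤ × ℤ, p ∈ (((Finset.Icc lo hi) ×ˢ (Finset.Icc lo hi)).filter
        (fun p : ℤ × ℤ => p.1 < p.2 ∧ u p.1 = c ∧ u p.2 = 1-c)) \
     (((Finset.Icc lo hi) ×ˢ (Finset.Icc lo hi)).filter
        (fun p : ℤ × ℤ => p.1 < p.2 ∧ v p.1 = c ∧ v p.2 = 1-c)) →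
      (p.1 = k ∨ p.2 = k) ∧ p.1 < p.2 ∧ u p.1 = c ∧ u p.2 = 1 - c := by
    intro p hp
    simp only [Finset.mem_sdiff, Finset.mem_filter] at hp
    obtain ⟨⟨hpT, h12, hu1, hu2⟩, hnp⟩ := hp
    refine ⟨?_, h12, hu1, hu2⟩
    by_contra hcon
    push_neg at hcon
    exact hnp ⟨hpT, h12, by rw [← huv _ hcon.1]; exact hu1, by rw [← huv _ hcon.2]; exact hu2⟩
  apply Finset.card_le_card_of_injOn (fun p => p.1 + p.2 - k)
  · intro p hp
    obtain ⟨hk, h12, hu1, hu2⟩ := key p hp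
    simp only [Finset.mem_coe, Finset.mem_Icc]
    rcases hk with hk | hk
    · have hne : p.2 ≠ k := by omega
      have := h2 p.2 hne hu2
      omega
    · have hne : p.1 ≠ k := by omega
      have := h1 p.1 hne hu1
      omega
  · intro p hp p' hp' hf
    simp only [Finset.mem_coe] at hp hp'
    obtain ⟨hk, h12, hu1, hu2⟩ := key p hp
    obtain ⟨hk', h12', hu1', hu2'⟩ := key p' hp'
    simp only at hf
    rcases hk with hk | hk <;> rcases hk' with hk' | hk'
    · exact Prod.ext (by omega) (by omega)
    · exfalso; rw [hk] at hu1; rw [hk'] at hu2'; omega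
    · exfalso; rw [hk] at hu2; rw [hk'] at hu1'; omega
    · exact Prod.ext (by omega) (by omega)

private lemma card_diff_le (A B : Finset (ℤ × ℤ)) (D : ℕ)
    (h1 : (A \ B).card ≤ D) (h2 : (B \ A).card ≤ D) :
    |(A.card : ℤ) - B.card| ≤ (D : ℤ) := by
  have hA := Finset.card_le_card_sdiff_add_card (s := A) (t := B)
  have hB := Finset.card_le_card_sdiff_add_card (s := B) (t := A)
  rw [abs_le]; omega

private lemma swap_card_diff (x : ℤ → ℤ) (c k lo hi : ℤ)
    (hk : lo ≤ k) (hk1 : k + 1 ≤ hi) :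
    |((((Finset.Icc lo hi) ×ˢ (Finset.Icc lo hi)).filter
        (fun p : ℤ × ℤ => p.1 < p.2 ∧ swapAt x k p.1 = c ∧ swapAt x k p.2 = 1-c)).card : ℤ) -
     ((((Finset.Icc lo hi) ×ˢ (Finset.Icc lo hi)).filter
        (fun p : ℤ × ℤ => p.1 < p.2 ∧ x p.1 = c ∧ x p.2 = 1-c)).card : ℤ)| ≤ 1 := by
  set σ : ℤ → ℤ := fun j => if j = k then k+1 else if j = k+1 then k else j with hσ
  have hσx : ∀ j, swapAt x k j = x (σ j) := by
    intro j; simp only [swapAt, hσ]; split_ifs <;> rfl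
  have hσσ : ∀ j, σ (σ j) = j := by
    intro j; simp only [hσ]; split_ifs <;> omega
  have hσmem : ∀ j, j ∈ Finset.Icc lo hi → σ j ∈ Finset.Icc lo hi := by
    intro j hj; simp only [Finset.mem_Icc, hσ] at *; split_ifs <;> omega
  have hσord : ∀ a b : ℤ, a < b → ¬(a = k ∧ b = k + 1) → σ a < σ b := by
    intro a b hab hne; simp only [hσ]; split_ifs <;> omega
  set A := (((Finset.Icc lo hi) ×ˢ (Finset.Icc lo hi)).filter
        (fun p : ℤ × ℤ => p.1 < p.2 ∧ swapAt x k p.1 = c ∧ swapAt x k p.2 = 1-c)) with hA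
  set B := (((Finset.Icc lo hi) ×ˢ (Finset.Icc lo hi)).filter
        (fun p : ℤ × ℤ => p.1 < p.2 ∧ x p.1 = c ∧ x p.2 = 1-c)) with hB
  have hcard : (A.erase (k, k+1)).card = (B.erase (k, k+1)).card := by
    apply Finset.card_nbij' (i := fun p => (σ p.1, σ p.2)) (j := fun p => (σ p.1, σ p.2))
    · intro p hp
      simp only [Finset.mem_coe, Finset.mem_erase, hA, Finset.mem_filter, Finset.mem_product] at hp
      obtain ⟨hpe, ⟨hp1, hp2⟩, h12, hv1, hv2⟩ := hp
      have hpe' : ¬(p.1 = k ∧ p.2 = k + 1) := by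
        intro ⟨e1, e2⟩; exact hpe (Prod.ext e1 e2)
      simp only [Finset.mem_coe, Finset.mem_erase, hB, Finset.mem_filter, Finset.mem_product]
      refine ⟨?_, ⟨hσmem _ hp1, hσmem _ hp2⟩, hσord _ _ h12 hpe', ?_, ?_⟩
      · intro he
        have e1 : σ p.1 = k := congrArg Prod.fst he
        have e2 : σ p.2 = k + 1 := congrArg Prod.snd he
        have : p.1 = σ k := by rw [← e1, hσσ]
        have : p.1 = k + 1 := by simp only [hσ] at this; simp at this; omega
        have : p.2 = σ (k+1) := by rw [← e2, hσσ]
        simp only [hσ] at this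
        simp at this
        omega
      · rw [← hσx]; exact hv1
      · rw [← hσx]; exact hv2
    · intro p hp
      simp only [Finset.mem_coe, Finset.mem_erase, hB, Finset.mem_filter, Finset.mem_product] at hp
      obtain ⟨hpe, ⟨hp1, hp2⟩, h12, hv1, hv2⟩ := hp
      have hpe' : ¬(p.1 = k ∧ p.2 = k + 1) := by
        intro ⟨e1, e2⟩; exact hpe (Prod.ext e1 e2)
      simp only [Finset.mem_coe, Finset.mem_erase, hA, Finset.mem_filter, Finset.mem_product]
      refine ⟨?_, ⟨hσmem _ hp1, hσmem _ hp2⟩, hσord _ _ h12 hpe', ?_, ?_⟩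
      · intro he
        have e1 : σ p.1 = k := congrArg Prod.fst he
        have e2 : σ p.2 = k + 1 := congrArg Prod.snd he
        have f1 : p.1 = σ k := by rw [← e1, hσσ]
        have f1' : p.1 = k + 1 := by simp only [hσ] at f1; simp at f1; omega
        have f2 : p.2 = σ (k+1) := by rw [← e2, hσσ]
        simp only [hσ] at f2
        simp at f2
        omega
      · rw [hσx, hσσ]; exact hv1
      · rw [hσx, hσσ]; exact hv2
    · intro p _; exact Prod.ext (hσσ _) (hσσ _)
    · intro p _; exact Prod.ext (hσσ _) (hσσ _)
  have hAsub : A ⊆ insert (k, k+1) (A.erase (k, k+1)) := by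
    intro a ha
    by_cases h : a = (k, k+1)
    · simp [h]
    · exact Finset.mem_insert_of_mem (Finset.mem_erase.2 ⟨h, ha⟩)
  have hBsub : B ⊆ insert (k, k+1) (B.erase (k, k+1)) := by
    intro a ha
    by_cases h : a = (k, k+1)
    · simp [h]
    · exact Finset.mem_insert_of_mem (Finset.mem_erase.2 ⟨h, ha⟩)
  have c1 : A.card ≤ (A.erase (k, k+1)).card + 1 :=
    le_trans (Finset.card_le_card hAsub) (Finset.card_insert_le _ _)
  have c2 : B.card ≤ (B.erase (k, k+1)).card + 1 :=
    le_trans (Finset.card_le_card hBsub) (Finset.card_insert_le _ _)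
  have c3 : (A.erase (k, k+1)).card ≤ A.card := Finset.card_erase_le
  have c4 : (B.erase (k, k+1)).card ≤ B.card := Finset.card_erase_le
  rw [abs_le]; omega

/-- Rough bound on the full generator contribution:
`|α₁·(G^flip f_CD)(x) + α₂·(G^excl f_CD)(x)| ≤ 2α₁w(y)² + α₂·B_n·n`. -/
theorem rough_generator_bound
    (x : ℤ → ℤ) (hx : IsHeight x)
    (p q bp bm : ℤ → ℝ)
    (hp : ∀ k, 0 ≤ p k) (hq : ∀ k, 0 ≤ q k)
    (hbp : ∀ i, 0 ≤ bp i) (hbm : ∀ i, 0 ≤ bm i)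
    (hrate0 : ∀ k, x (k - 1) = x k → p k = 0 ∧ q k = 0)
    (hup : ∀ k, p k + q k ≤ 1)
    (il ir : ℤ)
    (hil : itf x il ≠ 0 ∧ ∀ i, itf x i ≠ 0 → il ≤ i)
    (hir : itf x ir ≠ 0 ∧ ∀ i, itf x i ≠ 0 → i ≤ ir)
    (Bn : ℝ) (hBn : 0 ≤ Bn)
    (hbB : ∀ i : ℤ, bp i + bm i ≤ Bn)
    (α₁ α₂ : ℝ) (hα₁ : 0 ≤ α₁) (hα₂ : 0 ≤ α₂) :
    |α₁ * Gflip p q x + α₂ * Gexcl bp bm x|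
      ≤ 2 * α₁ * ((ir - il + 1 : ℤ) : ℝ) ^ 2 + α₂ * Bn * (pnum (itf x) : ℝ) := by
  obtain ⟨h01, a, b, hab, ⟨N, hN⟩, ⟨M, hM⟩⟩ := hx
  obtain ⟨hil1, hil2⟩ := hil
  obtain ⟨hir1, hir2⟩ := hir
  have hilir : il ≤ ir := hil2 ir hir1
  have hout : ∀ i : ℤ, i < il ∨ ir < i → x i = x (i - 1) := by
    intro i hi
    by_contra h
    have hne : itf x i ≠ 0 := by unfold itf; omega
    rcases hi with hi | hi
    · exact absurd (hil2 i hne) (by omega)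
    · exact absurd (hir2 i hne) (by omega)
  have hleft : ∀ j : ℤ, j ≤ il - 1 → x j = x (il - 1) := by
    intro j hj
    rcases eq_or_lt_of_le hj with h | h
    · rw [h]
    · exact (const_right x j (il-1) (by omega) (fun i h1 h2 => hout i (Or.inl (by omega)))).symm
  have hright : ∀ j : ℤ, ir ≤ j → x j = x ir := by
    intro j hj
    rcases eq_or_lt_of_le hj with h | h
    · rw [← h]
    · exact const_right x ir j (by omega) (fun i h1 h2 => hout i (Or.inr (by omega)))
  have hA : x (il - 1) = a := by
    rcases le_or_gt N (il - 1) with h | h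
    · rw [const_right x N (il-1) h (fun i h1 h2 => hout i (Or.inl (by omega)))]
      exact hN N le_rfl
    · exact hN _ (by omega)
  have hB : x ir = b := by
    rcases le_or_gt M ir with h | h
    · exact hM ir h
    · rw [← hM M le_rfl]
      exact (hright M (by omega)).symm
  set c := x ir with hc
  have hc01 : c = 0 ∨ c = 1 := h01 ir
  have haeq : x (il - 1) = 1 - c := by
    have h1 := h01 (il - 1)
    have h2 : x (il - 1) ≠ c := by rw [hA, hB]; exact hab
    omega
  have hcne : c ≠ 1 - c := by omega
  -- kappa of x and of locally modified configurations
  have hkz : ∀ z : ℤ → ℤ, (∀ j, j ≤ il - 2 → z j = x j) → (∀ j, ir + 1 ≤ j → z j = x j) →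
      kappa z = c := by
    intro z hzl hzr
    have hsupp : ∀ i, itf z i ≠ 0 → il - 1 ≤ i ∧ i ≤ ir + 1 := by
      intro i hi
      by_contra h
      apply hi
      have h' : i ≤ il - 2 ∨ ir + 2 ≤ i := by omega
      unfold itf
      rcases h' with h' | h'
      · rw [hzl i (by omega), hzl (i-1) (by omega)]
        have := hout i (Or.inl (by omega)); omega
      · rw [hzr i (by omega), hzr (i-1) (by omega)]
        have := hout i (Or.inr (by omega)); omega
    have hch := charge_eq_s9 z (il-1) (ir+1) (by omega) hsupp
    have e1 : z (ir+1) = c := by rw [hzr _ (by omega)]; exact hright (ir+1) (by omega)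
    have e2 : z (il - 1 - 1) = 1 - c := by
      rw [show il - 1 - 1 = il - 2 by ring, hzl _ (by omega)]
      rw [hleft (il-2) (by omega)]; exact haeq
    rw [kappa, hch, e1, e2]; omega
  -- fCD as a Finset card
  set T : Finset ℤ := Finset.Icc (il - 1) ir with hT
  have hfCD : ∀ z : ℤ → ℤ, (∀ j, j ≤ il - 2 → z j = x j) → (∀ j, ir + 1 ≤ j → z j = x j) →
      fCD z = ((T ×ˢ T).filter (fun p : ℤ × ℤ => p.1 < p.2 ∧ z p.1 = c ∧ z p.2 = 1 - c)).card := by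
    intro z hzl hzr
    apply fCD_card z c (hkz z hzl hzr)
    intro pp h1 h2 h3
    have hp1 : il - 1 ≤ pp.1 := by
      by_contra h
      rw [hzl pp.1 (by omega), hleft pp.1 (by omega), haeq] at h2
      omega
    have hp2 : pp.2 ≤ ir := by
      by_contra h
      rw [hzr pp.2 (by omega), hright pp.2 (by omega)] at h3
      omega
    simp only [Finset.mem_product, hT, Finset.mem_Icc]
    omega
  have hx_c : ∀ j : ℤ, x j = c → il ≤ j := by
    intro j hj
    by_contra h
    rw [hleft j (by omega), haeq] at hj; omega
  have hx_1c : ∀ j : ℤ, x j = 1 - c → j ≤ ir - 1 := by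
    intro j hj
    by_contra h
    rw [hright j (by omega)] at hj; omega
  -- ===================== Gflip bound =====================
  set W : ℝ := ((ir - il + 1 : ℤ) : ℝ) with hW
  have hW1 : (1 : ℝ) ≤ W := by
    rw [hW]; have h0 : (1:ℤ) ≤ ir - il + 1 := by omega
    exact_mod_cast h0
  have hcardT : (T.card : ℝ) = W + 1 := by
    rw [hT, Int.card_Icc]
    rw [show ir + 1 - (il - 1) = (ir - il + 2) by ring]
    rw [hW]
    have h0 : (0:ℤ) ≤ ir - il + 2 := by omega
    rw [show ((ir - il + 2).toNat : ℝ) = (((ir - il + 2).toNat : ℤ) : ℝ) by push_cast; ring]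
    rw [Int.toNat_of_nonneg h0]
    push_cast; ring
  set Dn : ℕ := (Finset.Icc il (ir-1)).card with hDn
  have hcardD : (Dn : ℝ) = W - 1 := by
    rw [hDn, Int.card_Icc, show ir - 1 + 1 - il = ir - il by ring, hW]
    have h0 : (0:ℤ) ≤ ir - il := by omega
    rw [show (((ir - il).toNat) : ℝ) = ((((ir - il).toNat) : ℤ) : ℝ) by push_cast; ring]
    rw [Int.toNat_of_nonneg h0]
    push_cast; ring
  have hflipdiff : ∀ k ∈ T, |((fCD (flipAt x k) : ℝ)) - (fCD x : ℝ)| ≤ (Dn : ℝ) := by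
    intro k hk
    simp only [hT, Finset.mem_Icc] at hk
    have hzl : ∀ j, j ≤ il - 2 → flipAt x k j = x j := by
      intro j hj; exact Function.update_of_ne (by omega) _ _
    have hzr : ∀ j, ir + 1 ≤ j → flipAt x k j = x j := by
      intro j hj; exact Function.update_of_ne (by omega) _ _
    have huv : ∀ j, j ≠ k → flipAt x k j = x j := by
      intro j hj; exact Function.update_of_ne hj _ _
    rw [hfCD (flipAt x k) hzl hzr, hfCD x (fun _ _ => rfl) (fun _ _ => rfl)]
    have hint := card_diff_le
      ((T ×ˢ T).filter (fun p : ℤ × ℤ => p.1 < p.2 ∧ flipAt x k p.1 = c ∧ flipAt x k p.2 = 1 - c))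
      ((T ×ˢ T).filter (fun p : ℤ × ℤ => p.1 < p.2 ∧ x p.1 = c ∧ x p.2 = 1 - c)) Dn ?_ ?_
    · exact_mod_cast hint
    · rw [hT, hDn]
      apply card_sdiff_le_flip c k il (ir-1) (il-1) ir hcne (flipAt x k) x huv (by omega) (by omega)
      · intro j hj hv; rw [huv j hj] at hv; exact hx_c j hv
      · intro j hj hv; rw [huv j hj] at hv; exact hx_1c j hv
    · rw [hT, hDn]
      apply card_sdiff_le_flip c k il (ir-1) (il-1) ir hcne x (flipAt x k)
        (fun j hj => (huv j hj).symm) (by omega) (by omega)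
      · intro j hj hv; exact hx_c j hv
      · intro j hj hv; exact hx_1c j hv
  have hGfsum : Gflip p q x
      = ∑ k ∈ T, (p k + q (k + 1)) * ((fCD (flipAt x k) : ℝ) - (fCD x : ℝ)) := by
    unfold Gflip
    apply finsum_eq_sum_of_support_subset
    intro k hk
    simp only [Function.mem_support] at hk
    simp only [Finset.coe_Icc, Set.mem_Icc, hT]
    by_contra h
    apply hk
    have h' : k < il - 1 ∨ ir < k := by omega
    have hp0 : p k = 0 := by
      apply (hrate0 k ?_).1
      rcases h' with h' | h' <;> exact (hout k (by omega)).symm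
    have hq0 : q (k + 1) = 0 := by
      apply (hrate0 (k+1) ?_).2
      exact (hout (k+1) (by rcases h' with h' | h' <;> omega)).symm
    rw [hp0, hq0]; ring
  have hGfbound : |Gflip p q x| ≤ (W + 1) * (2 * (W - 1)) := by
    rw [hGfsum]
    calc |∑ k ∈ T, (p k + q (k + 1)) * ((fCD (flipAt x k) : ℝ) - (fCD x : ℝ))|
        ≤ ∑ k ∈ T, |(p k + q (k + 1)) * ((fCD (flipAt x k) : ℝ) - (fCD x : ℝ))| :=
          Finset.abs_sum_le_sum_abs _ _
      _ ≤ ∑ k ∈ T, (2 : ℝ) * (Dn : ℝ) := by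
          apply Finset.sum_le_sum
          intro k hk
          rw [abs_mul]
          have hco : |p k + q (k + 1)| ≤ 2 := by
            rw [abs_of_nonneg (add_nonneg (hp k) (hq (k+1)))]
            have h1 := hup k
            have h2 := hup (k+1)
            have h3 := hp (k+1)
            have h4 := hq k
            linarith
          have hd := hflipdiff k hk
          have habs : (0:ℝ) ≤ |(fCD (flipAt x k) : ℝ) - (fCD x : ℝ)| := abs_nonneg _
          calc |p k + q (k + 1)| * |(fCD (flipAt x k) : ℝ) - (fCD x : ℝ)|
              ≤ 2 * |(fCD (flipAt x k) : ℝ) - (fCD x : ℝ)| :=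
                mul_le_mul_of_nonneg_right hco habs
            _ ≤ 2 * (Dn : ℝ) := by linarith
      _ = (T.card : ℝ) * (2 * (Dn : ℝ)) := by rw [Finset.sum_const, nsmul_eq_mul]
      _ = (W + 1) * (2 * (W - 1)) := by rw [hcardT, hcardD]
  -- ===================== Gexcl bound =====================
  set F2 : Finset ℤ := (Finset.Icc (il-1) (ir-1)).filter (fun k => x k ≠ x (k+1)) with hF2
  have hswapdiff : ∀ k ∈ F2, |((fCD (swapAt x k) : ℝ)) - (fCD x : ℝ)| ≤ 1 := by
    intro k hk
    simp only [hF2, Finset.mem_filter, Finset.mem_Icc] at hk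
    have hzl : ∀ j, j ≤ il - 2 → swapAt x k j = x j := by
      intro j hj; simp only [swapAt]; rw [if_neg (by omega), if_neg (by omega)]
    have hzr : ∀ j, ir + 1 ≤ j → swapAt x k j = x j := by
      intro j hj; simp only [swapAt]; rw [if_neg (by omega), if_neg (by omega)]
    rw [hfCD (swapAt x k) hzl hzr, hfCD x (fun _ _ => rfl) (fun _ _ => rfl)]
    have hsw := swap_card_diff x c k (il-1) ir (by omega) (by omega)
    rw [← hT] at hsw
    exact_mod_cast hsw
  have hGesum : Gexcl bp bm x = ∑ k ∈ F2,
      ((if x k = 0 ∧ x (k + 1) = 1 then bp (k + 1) else 0)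
        + (if x k = 1 ∧ x (k + 1) = 0 then bm (k + 1) else 0))
      * ((fCD (swapAt x k) : ℝ) - (fCD x : ℝ)) := by
    unfold Gexcl
    apply finsum_eq_sum_of_support_subset
    intro k hk
    simp only [Function.mem_support] at hk
    by_cases hxx : x k = x (k + 1)
    · exfalso
      apply hk
      rw [if_neg (by omega), if_neg (by omega)]
      ring
    · have hitf : itf x (k+1) ≠ 0 := by
        unfold itf; rw [show k + 1 - 1 = k by ring]; omega
      have hb1 := hil2 _ hitf
      have hb2 := hir2 _ hitf
      simp only [hF2, Finset.coe_filter, Set.mem_setOf_eq, Finset.mem_Icc]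
      exact ⟨⟨by omega, by omega⟩, hxx⟩
  have hF2card : (pnum (itf x) : ℝ) = (F2.card : ℝ) := by
    have hps : pnum (itf x) = ∑ i ∈ Finset.Icc il ir, |itf x i| := by
      rw [pnum]
      apply finsum_eq_sum_of_support_subset
      intro i hi
      simp only [Function.mem_support] at hi
      simp only [Finset.coe_Icc, Set.mem_Icc]
      have hi' : itf x i ≠ 0 := fun h => hi (by rw [h]; simp)
      exact ⟨hil2 i hi', hir2 i hi'⟩
    have hval : ∀ i ∈ Finset.Icc il ir, |itf x i|
        = if x (i-1) ≠ x i then (1:ℤ) else 0 := by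
      intro i _
      have h1 := h01 i
      have h2 := h01 (i-1)
      have hit : itf x i = x i - x (i-1) := rfl
      split_ifs with h
      · have h' : x i - x (i-1) = 1 ∨ x i - x (i-1) = -1 := by omega
        rw [hit]
        rcases h' with h' | h' <;> rw [h'] <;> norm_num
      · push_neg at h
        have h' : x i - x (i-1) = 0 := by omega
        rw [hit, h']; norm_num
    have hsum : pnum (itf x)
        = (((Finset.Icc il ir).filter (fun i => x (i-1) ≠ x i)).card : ℤ) := by
      rw [hps, Finset.sum_congr rfl hval, Finset.sum_boole]
    have hbij : ((Finset.Icc il ir).filter (fun i => x (i-1) ≠ x i)).card = F2.card := by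
      apply Finset.card_nbij' (i := fun i => i - 1) (j := fun k => k + 1)
      · intro i hi
        simp only [Finset.mem_coe, Finset.mem_filter, Finset.mem_Icc] at hi
        simp only [Finset.mem_coe, hF2, Finset.mem_filter, Finset.mem_Icc]
        refine ⟨⟨by omega, by omega⟩, ?_⟩
        rw [show i - 1 + 1 = i by ring]
        exact fun hcon => hi.2 hcon
      · intro k hk
        simp only [Finset.mem_coe, hF2, Finset.mem_filter, Finset.mem_Icc] at hk
        simp only [Finset.mem_coe, Finset.mem_filter, Finset.mem_Icc]
        refine ⟨⟨by omega, by omega⟩, ?_⟩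
        rw [show k + 1 - 1 = k by ring]
        exact hk.2
      · intro i _; beta_reduce; omega
      · intro k _; beta_reduce; omega
    rw [hsum, hbij]
    norm_num
  have hGebound : |Gexcl bp bm x| ≤ (F2.card : ℝ) * Bn := by
    rw [hGesum]
    calc |∑ k ∈ F2, ((if x k = 0 ∧ x (k + 1) = 1 then bp (k + 1) else 0)
        + (if x k = 1 ∧ x (k + 1) = 0 then bm (k + 1) else 0))
        * ((fCD (swapAt x k) : ℝ) - (fCD x : ℝ))|
        ≤ ∑ k ∈ F2, |((if x k = 0 ∧ x (k + 1) = 1 then bp (k + 1) else 0)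
        + (if x k = 1 ∧ x (k + 1) = 0 then bm (k + 1) else 0))
        * ((fCD (swapAt x k) : ℝ) - (fCD x : ℝ))| := Finset.abs_sum_le_sum_abs _ _
      _ ≤ ∑ k ∈ F2, Bn := by
          apply Finset.sum_le_sum
          intro k hk
          rw [abs_mul]
          have hc0 : (0:ℝ) ≤ (if x k = 0 ∧ x (k + 1) = 1 then bp (k + 1) else 0)
              + (if x k = 1 ∧ x (k + 1) = 0 then bm (k + 1) else 0) := by
            apply add_nonneg <;> [skip; skip] <;> split_ifs <;>
              first | exact hbp _ | exact hbm _ | exact le_refl 0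
          have hcB : (if x k = 0 ∧ x (k + 1) = 1 then bp (k + 1) else 0)
              + (if x k = 1 ∧ x (k + 1) = 0 then bm (k + 1) else 0) ≤ Bn := by
            have g1 := hbB (k+1)
            have g2 := hbp (k+1)
            have g3 := hbm (k+1)
            split_ifs with u1 u2 u3 <;> first | (exfalso; omega) | linarith
          have hd := hswapdiff k hk
          have habs0 : (0:ℝ) ≤ |(fCD (swapAt x k) : ℝ) - (fCD x : ℝ)| := abs_nonneg _
          rw [abs_of_nonneg hc0]
          calc ((if x k = 0 ∧ x (k + 1) = 1 then bp (k + 1) else 0)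
              + (if x k = 1 ∧ x (k + 1) = 0 then bm (k + 1) else 0))
              * |(fCD (swapAt x k) : ℝ) - (fCD x : ℝ)|
              ≤ Bn * |(fCD (swapAt x k) : ℝ) - (fCD x : ℝ)| :=
                mul_le_mul_of_nonneg_right hcB habs0
            _ ≤ Bn * 1 := mul_le_mul_of_nonneg_left hd hBn
            _ = Bn := mul_one Bn
      _ = (F2.card : ℝ) * Bn := by rw [Finset.sum_const, nsmul_eq_mul]
  -- ===================== combine =====================
  have habs := abs_add_le (α₁ * Gflip p q x) (α₂ * Gexcl bp bm x)
  rw [abs_mul, abs_of_nonneg hα₁, abs_mul, abs_of_nonneg hα₂] at habs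
  have e1 : α₁ * |Gflip p q x| ≤ α₁ * ((W + 1) * (2 * (W - 1))) :=
    mul_le_mul_of_nonneg_left hGfbound hα₁
  have e2 : α₂ * |Gexcl bp bm x| ≤ α₂ * ((F2.card : ℝ) * Bn) :=
    mul_le_mul_of_nonneg_left hGebound hα₂
  have e3 : α₁ * ((W + 1) * (2 * (W - 1))) ≤ 2 * α₁ * W ^ 2 := by nlinarith [hW1, hα₁]
  rw [hF2card]
  nlinarith [habs, e1, e2, e3]
end
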